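/- arXiv:math/0404318 — 4 statements merged into one kernel-verified Lean document; each statement's English description precedes it below -/
import Mathlib

section
/- Assume κ > ω, and assume that δ < κ, or θ < κ, or κ is not a limit cardinal. Then there exists a [δ]^{<θ}-normal ideal on P_κ(λ) if and only if |P_θ̄(μ)| < κ for every cardinal μ with μ < κ and μ ≤ δ. -/
open Cardinal Set

namespace PklNormal

/-- `P_κ(l)`: the collection of subsets of (the set of ordinals below) `l`
of cardinality `< κ`. -/
def PSet (κ : Cardinal.{0}) (l : Ordinal.{0}) : Set (Set Ordinal.{0}) :=
  {a | a ⊆ Set.Iio l ∧ #↥a < Cardinal.lift.{1} κ}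

/-- `e ∈ P_{|a ∩ σ|}(a ∩ γ)`. -/
def inP (σ : Cardinal.{0}) (γ : Ordinal.{0}) (a e : Set Ordinal.{0}) : Prop :=
  e ⊆ a ∩ Set.Iio γ ∧ #↥e < #↥(a ∩ Set.Iio σ.ord)

/-- The collection `I_{κ,l}` of non-cofinal subsets of `P_κ(l)`. -/
def Ikl (κ : Cardinal.{0}) (l : Ordinal.{0}) : Set (Set (Set Ordinal.{0})) :=
  {B | B ⊆ PSet κ l ∧ ∃ a ∈ PSet κ l, ∀ b ∈ B, ¬ a ⊆ b}

/-- An ideal on `P_κ(l)`. -/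
structure IsIdeal (κ : Cardinal.{0}) (l : Ordinal.{0})
    (K : Set (Set (Set Ordinal.{0}))) : Prop where
  mem_subset : ∀ B ∈ K, B ⊆ PSet κ l
  subset_mem : ∀ B ∈ K, ∀ C ⊆ B, C ∈ K
  sUnion_mem : ∀ Y ⊆ K, Y.Nonempty → #↥Y < Cardinal.lift.{1} κ → ⋃₀ Y ∈ K
  nonCofinal_subset : Ikl κ l ⊆ K
  univ_not_mem : PSet κ l ∉ K

/-- `K⁺`: the subsets of `P_κ(l)` not in `K`. -/
def plus (κ : Cardinal.{0}) (l : Ordinal.{0}) (K : Set (Set (Set Ordinal.{0}))) :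
    Set (Set (Set Ordinal.{0})) :=
  {B | B ⊆ PSet κ l ∧ B ∉ K}

/-- `K*`: the subsets of `P_κ(l)` whose complement is in `K`. -/
def star (κ : Cardinal.{0}) (l : Ordinal.{0}) (K : Set (Set (Set Ordinal.{0}))) :
    Set (Set (Set Ordinal.{0})) :=
  {B | B ⊆ PSet κ l ∧ PSet κ l \ B ∈ K}

/-- `K|A`. -/
def restrict (κ : Cardinal.{0}) (l : Ordinal.{0}) (K : Set (Set (Set Ordinal.{0})))
    (A : Set (Set Ordinal.{0})) : Set (Set (Set Ordinal.{0})) :=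
  {B | B ⊆ PSet κ l ∧ B ∩ A ∈ K}

/-- `∇^{[γ]^{<σ}} J`. -/
def nabla (κ : Cardinal.{0}) (l : Ordinal.{0}) (σ : Cardinal.{0}) (γ : Ordinal.{0})
    (J : Set (Set (Set Ordinal.{0}))) : Set (Set (Set Ordinal.{0})) :=
  {B | ∃ F : Set Ordinal.{0} → Set (Set Ordinal.{0}),
    (∀ e ∈ PSet σ γ, F e ∈ J) ∧
    B ⊆ {a | a ∈ PSet κ l ∧ a ∩ Set.Iio σ.ord = ∅} ∪
      ⋃ e ∈ PSet σ γ, {a | a ∈ F e ∧ inP σ γ a e}}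

/-- `J` is `[γ]^{<σ}`-normal. -/
def IsNormal (κ : Cardinal.{0}) (l : Ordinal.{0}) (σ : Cardinal.{0}) (γ : Ordinal.{0})
    (J : Set (Set (Set Ordinal.{0}))) : Prop :=
  J = nabla κ l σ γ J

def IsNormalIdeal (κ : Cardinal.{0}) (l : Ordinal.{0}) (σ : Cardinal.{0}) (γ : Ordinal.{0})
    (J : Set (Set (Set Ordinal.{0}))) : Prop :=
  IsIdeal κ l J ∧ IsNormal κ l σ γ J

/-- `N` is the smallest `[γ]^{<σ}`-normal ideal on `P_κ(l)`. -/
def IsLeastNormalIdeal (κ : Cardinal.{0}) (l : Ordinal.{0}) (σ : Cardinal.{0}) (γ : Ordinal.{0})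
    (N : Set (Set (Set Ordinal.{0}))) : Prop :=
  IsNormalIdeal κ l σ γ N ∧ ∀ J, IsNormalIdeal κ l σ γ J → N ⊆ J

/-- `∇^δ K`, the ordinal-indexed diagonal union. -/
def nablaOrd (κ : Cardinal.{0}) (l : Ordinal.{0}) (δ : Ordinal.{0})
    (K : Set (Set (Set Ordinal.{0}))) : Set (Set (Set Ordinal.{0})) :=
  {B | ∃ F : Ordinal.{0} → Set (Set Ordinal.{0}),
    (∀ α < δ, F α ∈ K) ∧
    B ⊆ {a | a ∈ PSet κ l ∧ (0 : Ordinal) ∉ a} ∪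
      ⋃ α ∈ Set.Iio δ, {a | a ∈ F α ∧ α ∈ a}}

/-- `J` is `δ`-normal. -/
def IsOrdNormal (κ : Cardinal.{0}) (l : Ordinal.{0}) (δ : Ordinal.{0})
    (J : Set (Set (Set Ordinal.{0}))) : Prop :=
  J = nablaOrd κ l δ J

/-- `θ̄`: equals `θ` if `θ < κ`, or if `θ = κ` and `κ` is a limit cardinal;
equals `ν` if `θ = κ = ν⁺`. -/
noncomputable def thetaBar (κ θ : Cardinal.{0}) : Cardinal.{0} :=
  haveI := Classical.propDecidable (θ < κ ∨ Order.IsSuccLimit κ)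
  if θ < κ ∨ Order.IsSuccLimit κ then θ else sSup {ν | Order.succ ν = κ}

/-- `cof(K)`: the least number of generators of `K`. -/
noncomputable def cofIdeal (K : Set (Set (Set Ordinal.{0}))) : Cardinal.{1} :=
  sInf {c | ∃ S ⊆ K, #↥S = c ∧ ∀ B ∈ K, ∃ C ∈ S, B ⊆ C}

/-- The dominating number `𝔡^μ_{κ,l}`. -/
noncomputable def dNum (κ : Cardinal.{0}) (l : Ordinal.{0}) (μ : Cardinal.{1}) : Cardinal.{1} :=
  sInf {c | ∃ F : Set (μ.ord.ToType → Set Ordinal.{0}),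
    #↥F = c ∧ (∀ f ∈ F, ∀ i, f i ∈ PSet κ l) ∧
    ∀ g : μ.ord.ToType → Set Ordinal.{0}, (∀ i, g i ∈ PSet κ l) →
      ∃ f ∈ F, ∀ i, g i ⊆ f i}

/-- `u(ρ,μ)`: the least cardinality of a cofinal subset of `(P_ρ(μ), ⊆)`. -/
noncomputable def uNum (ρ μ : Cardinal.{0}) : Cardinal.{1} :=
  sInf {c | ∃ X ⊆ PSet ρ μ.ord, #↥X = c ∧ ∀ e ∈ PSet ρ μ.ord, ∃ x ∈ X, e ⊆ x}

/-- `cov(lam, ν, ν, 2)`: the least cardinality of an `X ⊆ P_ν(lam)` such that every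
member of `P_ν(lam)` is contained in a member of `X`. -/
noncomputable def covNum (lam ν : Cardinal.{0}) : Cardinal.{1} :=
  sInf {c | ∃ X ⊆ PSet ν lam.ord, #↥X = c ∧ ∀ e ∈ PSet ν lam.ord, ∃ x ∈ X, e ⊆ x}

/-- `C` is closed unbounded in `l`. -/
def IsClubIn (C : Set Ordinal.{0}) (l : Ordinal.{0}) : Prop :=
  C ⊆ Set.Iio l ∧ (∀ p < l, ∃ q ∈ C, p < q) ∧
    (∀ o < l, Order.IsSuccLimit o → (∀ p < o, ∃ q ∈ C, p < q ∧ q < o) → o ∈ C)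

/-- `κ` is a Mahlo cardinal: the set of regular cardinals below `κ` is stationary in `κ`. -/
def IsMahlo (κ : Cardinal.{0}) : Prop :=
  ∀ C : Set Ordinal.{0}, IsClubIn C κ.ord →
    ∃ o ∈ C, ∃ ρ : Cardinal.{0}, ρ.IsRegular ∧ ρ.ord = o

-- ### basic helpers

lemma mk_Iio_ord (μ : Cardinal.{0}) : #↥(Set.Iio μ.ord) = Cardinal.lift.{1} μ := by
  rw [Ordinal.mk_Iio_ordinal, Cardinal.card_ord]

lemma lift_isRegular {κ : Cardinal.{0}} (h : κ.IsRegular) :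
    (Cardinal.lift.{1} κ).IsRegular := by
  constructor
  · simpa using h.aleph0_le
  · rw [← Cardinal.lift_ord, ← Ordinal.lift_cof, h.cof_eq]

lemma thetaBar_eq_of (κ θ : Cardinal.{0}) (h : θ < κ ∨ Order.IsSuccLimit κ) :
    thetaBar κ θ = θ := by
  unfold thetaBar
  exact if_pos h

lemma succ_thetaBar (κ θ : Cardinal.{0}) (hκω : ℵ₀ < κ)
    (h : ¬(θ < κ ∨ Order.IsSuccLimit κ)) : Order.succ (thetaBar κ θ) = κ := by
  rcases Order.not_isSuccLimit_iff.1 (fun hs => h (Or.inr hs)) with hmin | hpre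
  · exact absurd (hmin (bot_le : (⊥ : Cardinal) ≤ κ))
      (by simpa using (aleph0_pos.trans hκω).not_ge)
  · obtain ⟨ν, hν⟩ := Order.not_isSuccPrelimit_iff_exists_covBy.1 hpre
    have hsucc : Order.succ ν = κ := hν.succ_eq
    have hset : {ν' : Cardinal.{0} | Order.succ ν' = κ} = {ν} := by
      ext ν'
      simp only [Set.mem_setOf_eq, Set.mem_singleton_iff]
      constructor
      · intro hx; exact Order.succ_eq_succ_iff.1 (hx.trans hsucc.symm)
      · rintro rfl; exact hsucc
    unfold thetaBar
    rw [if_neg h, hset, csSup_singleton, hsucc]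

lemma thetaBar_le (κ θ : Cardinal.{0}) (hκω : ℵ₀ < κ) (hθκ : θ ≤ κ) :
    thetaBar κ θ ≤ θ := by
  by_cases h : θ < κ ∨ Order.IsSuccLimit κ
  · rw [thetaBar_eq_of κ θ h]
  · have hθ : θ = κ := le_antisymm hθκ (not_lt.1 fun hx => h (Or.inl hx))
    have hs := succ_thetaBar κ θ hκω h
    calc thetaBar κ θ ≤ Order.succ (thetaBar κ θ) := (Order.lt_succ _).le
      _ = κ := hs
      _ = θ := hθ.symm

lemma thetaBar_pos (κ θ : Cardinal.{0}) (hκω : ℵ₀ < κ) (hθ2 : 2 ≤ θ) :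
    0 < thetaBar κ θ := by
  by_cases h : θ < κ ∨ Order.IsSuccLimit κ
  · rw [thetaBar_eq_of κ θ h]; exact lt_of_lt_of_le (by norm_num) hθ2
  · have hs := succ_thetaBar κ θ hκω h
    by_contra h0
    push_neg at h0
    rw [nonpos_iff_eq_zero] at h0
    rw [h0, Cardinal.succ_zero] at hs
    rw [← hs] at hκω
    exact absurd hκω (lt_asymm Cardinal.one_lt_aleph0)

-- ### size of relevant e's

lemma mk_lt_thetaBar {κ θ : Cardinal.{0}} (hκω : ℵ₀ < κ) (hθκ : θ ≤ κ)
    {a e : Set Ordinal.{0}} (ha : #↥a < Cardinal.lift.{1} κ)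
    (h : #↥e < #↥(a ∩ Set.Iio θ.ord)) :
    #↥e < Cardinal.lift.{1} (thetaBar κ θ) := by
  by_cases hc : θ < κ ∨ Order.IsSuccLimit κ
  · rw [thetaBar_eq_of κ θ hc]
    refine h.trans_le ?_
    calc #↥(a ∩ Set.Iio θ.ord) ≤ #↥(Set.Iio θ.ord) :=
          Cardinal.mk_le_mk_of_subset inter_subset_right
      _ = Cardinal.lift.{1} θ := mk_Iio_ord θ
  · have hs := succ_thetaBar κ θ hκω hc
    have h2 : #↥(a ∩ Set.Iio θ.ord) ≤ #↥a := Cardinal.mk_le_mk_of_subset inter_subset_left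
    have h3 : #↥a < Order.succ (Cardinal.lift.{1} (thetaBar κ θ)) := by
      rw [← Cardinal.lift_succ, hs]; exact ha
    exact lt_of_lt_of_le (h.trans_le h2) (Order.lt_succ_iff.1 h3)

-- ### transfer lemma

lemma mk_small_subsets_le (y : Set Ordinal.{0}) (σ μ : Cardinal.{0})
    (h : #↥y ≤ Cardinal.lift.{1} μ) :
    #↥{e : Set Ordinal.{0} | e ⊆ y ∧ #↥e < Cardinal.lift.{1} σ} ≤ #↥(PSet σ μ.ord) := by
  classical
  obtain ⟨emb⟩ : Nonempty (↥y ↪ ↥(Set.Iio μ.ord)) := by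
    rw [← Cardinal.le_def, mk_Iio_ord]; exact h
  set g : Ordinal.{0} → Ordinal.{0} :=
    fun ξ => if hx : ξ ∈ y then (emb ⟨ξ, hx⟩ : Ordinal.{0}) else 0 with hg
  have hginj : Set.InjOn g y := by
    intro x hx x' hx' hxx
    simp only [hg, dif_pos hx, dif_pos hx'] at hxx
    have := emb.injective (Subtype.ext hxx)
    exact congrArg Subtype.val this
  have hgmem : ∀ ξ ∈ y, g ξ ∈ Set.Iio μ.ord := by
    intro ξ hξ
    simp only [hg, dif_pos hξ]
    exact (emb ⟨ξ, hξ⟩).2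
  refine Cardinal.mk_le_of_injective
    (f := fun e : ↥{e : Set Ordinal.{0} | e ⊆ y ∧ #↥e < Cardinal.lift.{1} σ} =>
      (⟨g '' e.1, fun ξ hξ => ?_, ?_⟩ : ↥(PSet σ μ.ord))) ?_
  · obtain ⟨ζ, hζ, rfl⟩ := hξ
    exact hgmem ζ (e.2.1 hζ)
  · rw [Cardinal.mk_image_eq_of_injOn g e.1 (hginj.mono e.2.1)]
    exact e.2.2
  · intro e1 e2 hee
    have himg : g '' e1.1 = g '' e2.1 := congrArg Subtype.val hee
    apply Subtype.ext
    ext ξ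
    constructor
    · intro hξ
      obtain ⟨ζ, hζ, hgζ⟩ := himg ▸ Set.mem_image_of_mem g hξ
      rwa [← hginj (e2.2.1 hζ) (e1.2.1 hξ) hgζ]
    · intro hξ
      obtain ⟨ζ, hζ, hgζ⟩ := himg.symm ▸ Set.mem_image_of_mem g hξ
      rwa [← hginj (e1.2.1 hζ) (e2.2.1 hξ) hgζ]

-- ### the (C)-derived step bound

lemma Cbound {κ θ : Cardinal.{0}} {δ : Ordinal.{0}}
    (hC : ∀ μ : Cardinal.{0}, μ < κ → μ.ord ≤ δ →
      #↥(PSet (thetaBar κ θ) μ.ord) < Cardinal.lift.{1} κ)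
    (y : Set Ordinal.{0}) (hyδ : y ⊆ Set.Iio δ) (hy : #↥y < Cardinal.lift.{1} κ) :
    #↥{e : Set Ordinal.{0} | e ⊆ y ∧ #↥e < Cardinal.lift.{1} (thetaBar κ θ)} <
      Cardinal.lift.{1} κ := by
  have h1 : #↥y ≤ Cardinal.lift.{1} δ.card := by
    rw [← Ordinal.mk_Iio_ordinal]
    exact Cardinal.mk_le_mk_of_subset hyδ
  obtain ⟨μ, hμ⟩ := Cardinal.mem_range_lift_of_le h1
  rw [← hμ] at h1 hy
  have hμκ : μ < κ := Cardinal.lift_lt.1 hy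
  have hμδ : μ.ord ≤ δ :=
    le_trans (Cardinal.ord_le_ord.2 (Cardinal.lift_le.1 h1)) (Cardinal.ord_card_le δ)
  exact (mk_small_subsets_le y _ μ hμ.ge).trans_lt (hC μ hμκ hμδ)

-- ### König-type lemma

lemma koenig (σ : Cardinal.{0}) (hσ : ℵ₀ ≤ σ) (hs : ¬σ.IsRegular) :
    Cardinal.lift.{1} σ < #↥(PSet σ σ.ord) := by
  set r := σ.ord.cof with hr
  have hrσ : r ≤ σ := Ordinal.cof_ord_le σ
  have hrlt : r < σ := lt_of_not_ge fun hc => hs ⟨hσ, hc⟩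
  have hrale : ℵ₀ ≤ r := by
    rw [hr, Ordinal.aleph0_le_cof]
    exact Cardinal.isSuccLimit_ord hσ
  have hpow : σ < σ ^ r := Cardinal.lt_power_cof hσ
  obtain ⟨q⟩ : Nonempty ((r.ord.ToType × σ.ord.ToType) ↪ ↥(Set.Iio σ.ord)) := by
    rw [← Cardinal.lift_mk_le']
    have hmk : #(r.ord.ToType × σ.ord.ToType) = σ := by
      rw [Cardinal.mk_prod, Cardinal.mk_toType, Cardinal.mk_toType, Cardinal.card_ord,
        Cardinal.card_ord, Cardinal.lift_id, Cardinal.lift_id]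
      exact Cardinal.mul_eq_right hσ hrσ (aleph0_pos.trans_le hrale).ne'
    rw [hmk, mk_Iio_ord]
    simp
  set S : (r.ord.ToType → σ.ord.ToType) → Set Ordinal.{0} :=
    fun gf => Set.range (fun i => ((q (i, gf i) : ↥(Set.Iio σ.ord)) : Ordinal.{0})) with hS
  have hinj : Function.Injective S := by
    intro g1 g2 hgg
    funext i
    have h1 : ((q (i, g1 i) : ↥(Set.Iio σ.ord)) : Ordinal.{0}) ∈ S g2 := by
      rw [← hgg]; exact Set.mem_range_self i
    obtain ⟨i', hi'⟩ := h1
    have heq : q (i', g2 i') = q (i, g1 i) := Subtype.ext hi'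
    have hpair := q.injective heq
    have hi : i' = i := congrArg Prod.fst hpair
    have hsnd := congrArg Prod.snd hpair
    rw [hi] at hsnd
    exact hsnd.symm
  have hmemP : ∀ gf, S gf ∈ PSet σ σ.ord := by
    intro gf
    constructor
    · rintro ξ ⟨i, rfl⟩
      exact (q (i, gf i)).2
    · have h1 := Cardinal.mk_range_le_lift
        (f := fun i => ((q (i, gf i) : ↥(Set.Iio σ.ord)) : Ordinal.{0}))
      rw [Cardinal.lift_id'.{0,1}] at h1
      calc #↥(S gf) ≤ Cardinal.lift.{1} #r.ord.ToType := h1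
        _ = Cardinal.lift.{1} r := by rw [Cardinal.mk_toType, Cardinal.card_ord]
        _ < Cardinal.lift.{1} σ := Cardinal.lift_lt.2 hrlt
  have hfun : σ ^ r = #(r.ord.ToType → σ.ord.ToType) := by
    rw [← Cardinal.power_def, Cardinal.mk_toType, Cardinal.mk_toType, Cardinal.card_ord,
      Cardinal.card_ord]
  have hle : Cardinal.lift.{1} (σ ^ r) ≤ #↥(PSet σ σ.ord) := by
    rw [hfun]
    have hemb : Nonempty ((r.ord.ToType → σ.ord.ToType) ↪ ↥(PSet σ σ.ord)) :=
      ⟨⟨fun gf => ⟨S gf, hmemP gf⟩,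
        fun g1 g2 h => hinj (congrArg Subtype.val h)⟩⟩
    have := Cardinal.lift_mk_le'.2 hemb
    simpa using this
  calc Cardinal.lift.{1} σ < Cardinal.lift.{1} (σ ^ r) := Cardinal.lift_lt.2 hpow
    _ ≤ _ := hle

-- ### existence of a suitable regular chain length

lemma exists_rho {κ θ : Cardinal.{0}} {δ : Ordinal.{0}}
    (hκω : ℵ₀ < κ) (hθκ : θ ≤ κ)
    (hcase : δ < κ.ord ∨ θ < κ ∨ ¬ Order.IsSuccLimit κ)
    (hC : ∀ μ : Cardinal.{0}, μ < κ → μ.ord ≤ δ →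
      #↥(PSet (thetaBar κ θ) μ.ord) < Cardinal.lift.{1} κ) :
    ∃ ρ : Cardinal.{0}, ρ.IsRegular ∧
      min (thetaBar κ θ) (Order.succ δ.card) ≤ ρ ∧ ρ < κ := by
  set tb := thetaBar κ θ with htb
  set tm := min tb (Order.succ δ.card) with htm
  by_cases hsmall : tm ≤ ℵ₀
  · exact ⟨ℵ₀, Cardinal.isRegular_aleph0, hsmall, hκω⟩
  push_neg at hsmall
  have htmκ : tm < κ := by
    by_cases hθlt : θ < κ
    · refine (min_le_left _ _).trans_lt ?_
      rw [htb, thetaBar_eq_of κ θ (Or.inl hθlt)]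
      exact hθlt
    · by_cases hsl : Order.IsSuccLimit κ
      · have hδκ : δ < κ.ord := by
          rcases hcase with h | h | h
          · exact h
          · exact absurd h hθlt
          · exact absurd hsl h
        have hδc : δ.card < κ := Cardinal.lt_ord.1 hδκ
        exact (min_le_right _ _).trans_lt (hsl.succ_lt hδc)
      · have hsucc := succ_thetaBar κ θ hκω (fun hx => (hx.elim hθlt hsl))
        have htbκ : tb < κ := by rw [← hsucc]; exact Order.lt_succ _
        exact (min_le_left _ _).trans_lt htbκ
  by_cases hreg : tm.IsRegular
  · exact ⟨tm, hreg, le_rfl, htmκ⟩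
  have hδci : ℵ₀ ≤ δ.card := by
    by_contra hfin
    push_neg at hfin
    exact absurd (hsmall.trans_le (min_le_right _ _))
      (not_lt.2 (Order.succ_le_of_lt hfin))
  have htmtb : tm = tb := by
    rcases min_cases tb (Order.succ δ.card) with ⟨h1, _⟩ | ⟨h1, h2⟩
    · rw [htm, h1]
    · exfalso
      refine hreg ?_
      rw [htm, h1]
      exact Cardinal.isRegular_succ hδci
  have htbκ : tb < κ := htmtb ▸ htmκ
  have htbale : ℵ₀ ≤ tb := (htmtb ▸ hsmall).le
  have htbδ : tb ≤ δ.card := by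
    have h1 : tb ≤ Order.succ δ.card := by rw [← htmtb, htm]; exact min_le_right _ _
    rcases lt_or_eq_of_le h1 with h2 | h2
    · exact Order.lt_succ_iff.1 h2
    · exfalso
      refine hreg ?_
      rw [htmtb, h2]
      exact Cardinal.isRegular_succ hδci
  have hord : tb.ord ≤ δ := le_trans (Cardinal.ord_le_ord.2 htbδ) (Cardinal.ord_card_le δ)
  have hCtb := hC tb htbκ hord
  have hsuccκ : Order.succ tb < κ := by
    rcases lt_or_eq_of_le (Order.succ_le_of_lt htbκ) with h | h
    · exact h
    · exfalso
      have hk : Cardinal.lift.{1} κ = Order.succ (Cardinal.lift.{1} tb) := by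
        rw [← h, Cardinal.lift_succ]
      rw [hk] at hCtb
      have hle : #↥(PSet tb tb.ord) ≤ Cardinal.lift.{1} tb := Order.lt_succ_iff.1 hCtb
      exact absurd hle (not_le.2 (koenig tb htbale (htmtb ▸ hreg)))
  exact ⟨Order.succ tb, Cardinal.isRegular_succ htbale,
    (min_le_left _ _).trans (Order.lt_succ _).le, hsuccκ⟩

-- ### lists over a set

lemma mk_lists_le {α : Type 1} (S : Set α) :
    #↥{l : List α | ∀ e ∈ l, e ∈ S} ≤ max ℵ₀ #↥S := by
  have hinj : Function.Injective
      (fun l : ↥{l : List α | ∀ e ∈ l, e ∈ S} => (l.1.attachWith (· ∈ S) l.2)) := by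
    intro l1 l2 h
    have := congrArg (List.map Subtype.val) h
    simpa [List.map_attachWith, Subtype.ext_iff, List.map_id'] using this
  calc #↥{l : List α | ∀ e ∈ l, e ∈ S} ≤ #(List ↥S) := Cardinal.mk_le_of_injective hinj
    _ ≤ max ℵ₀ #↥S := Cardinal.mk_list_le_max _

lemma subset_foldr {α : Type 1} (l : List (Set α)) (e : Set α) (he : e ∈ l) :
    e ⊆ l.foldr (· ∪ ·) ∅ := by
  induction l with
  | nil => simp at he
  | cons e' l ih =>
    rcases List.mem_cons.1 he with rfl | h
    · exact subset_union_left
    · exact (ih h).trans subset_union_right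

lemma mk_foldr_lt {α : Type 1} (c : Cardinal.{1}) (hc : ℵ₀ ≤ c) (l : List (Set α))
    (h : ∀ e ∈ l, #↥e < c) : #↥(l.foldr (· ∪ ·) ∅) < c := by
  induction l with
  | nil =>
    simp only [List.foldr_nil]
    rw [Cardinal.mk_emptyCollection]
    exact aleph0_pos.trans_le hc
  | cons e l ih =>
    simp only [List.foldr_cons]
    exact (Cardinal.mk_union_le _ _).trans_lt
      (Cardinal.add_lt_of_lt hc (h e (by simp)) (ih fun e' he' => h e' (by simp [he'])))

-- ### the closure chain

def Ecand (θb : Cardinal.{0}) (δ : Ordinal.{0}) (x : Set Ordinal.{0}) :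
    Set (Set Ordinal.{0}) :=
  {e | e ⊆ x ∩ Set.Iio δ ∧ #↥e < Cardinal.lift.{1} θb}

def goodLists (θb : Cardinal.{0}) (δ : Ordinal.{0}) (x : Set Ordinal.{0}) :
    Set (List (Set Ordinal.{0})) :=
  {l | ∀ e ∈ l, e ∈ Ecand θb δ x}

def stepSet (θb : Cardinal.{0}) (δ : Ordinal.{0})
    (f : List (Set Ordinal.{0}) → Set Ordinal.{0}) (x : Set Ordinal.{0}) : Set Ordinal.{0} :=
  insert 0 (x ∪ ⋃ l : ↥(goodLists θb δ x), f l.1)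

noncomputable def chain (θb : Cardinal.{0}) (δ : Ordinal.{0})
    (f : List (Set Ordinal.{0}) → Set Ordinal.{0}) (i : Ordinal.{0}) : Set Ordinal.{0} :=
  stepSet θb δ f (⋃ j : ↥(Set.Iio i), chain θb δ f j.1)
termination_by i
decreasing_by exact j.2

lemma chain_eq (θb : Cardinal.{0}) (δ : Ordinal.{0})
    (f : List (Set Ordinal.{0}) → Set Ordinal.{0}) (i : Ordinal.{0}) :
    chain θb δ f i = stepSet θb δ f (⋃ j : ↥(Set.Iio i), chain θb δ f j.1) := by
  rw [chain]

lemma chain_mono (θb : Cardinal.{0}) (δ : Ordinal.{0})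
    (f : List (Set Ordinal.{0}) → Set Ordinal.{0}) {j i : Ordinal.{0}} (hji : j ≤ i) :
    chain θb δ f j ⊆ chain θb δ f i := by
  rcases eq_or_lt_of_le hji with rfl | hlt
  · exact subset_rfl
  · rw [chain_eq θb δ f i]
    refine subset_trans ?_ (subset_trans subset_union_left (subset_insert _ _))
    exact Set.subset_iUnion_of_subset (⟨j, hlt⟩ : ↥(Set.Iio i)) subset_rfl

lemma foldr_subset {α : Type 1} (l : List (Set α)) (t : Set α) (h : ∀ e ∈ l, e ⊆ t) :
    l.foldr (· ∪ ·) ∅ ⊆ t := by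
  induction l with
  | nil => simp
  | cons e l ih =>
    simp only [List.foldr_cons]
    exact union_subset (h e (by simp)) (ih fun e' he' => h e' (by simp [he']))

lemma Ecand_card {κ θ : Cardinal.{0}} {δ : Ordinal.{0}} {θb : Cardinal.{0}}
    (hC : ∀ μ : Cardinal.{0}, μ < κ → μ.ord ≤ δ →
      #↥(PSet (thetaBar κ θ) μ.ord) < Cardinal.lift.{1} κ)
    (hθb : θb ≤ thetaBar κ θ) (x : Set Ordinal.{0}) (hx : #↥x < Cardinal.lift.{1} κ) :
    #↥(Ecand θb δ x) < Cardinal.lift.{1} κ := by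
  refine lt_of_le_of_lt (Cardinal.mk_le_mk_of_subset ?_)
    (Cbound hC (x ∩ Set.Iio δ) inter_subset_right
      (lt_of_le_of_lt (Cardinal.mk_le_mk_of_subset inter_subset_left) hx))
  rintro e ⟨h1, h2⟩
  exact ⟨h1, h2.trans_le (Cardinal.lift_le.2 hθb)⟩

lemma stepSet_card {κ : Cardinal.{0}} {θb : Cardinal.{0}} {δ lam : Ordinal.{0}}
    (hκ : κ.IsRegular) (hκω : ℵ₀ < κ)
    {f : List (Set Ordinal.{0}) → Set Ordinal.{0}} (hf : ∀ l, f l ∈ PSet κ lam)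
    (x : Set Ordinal.{0})
    (hx : #↥x < Cardinal.lift.{1} κ) (hE : #↥(Ecand θb δ x) < Cardinal.lift.{1} κ) :
    #↥(stepSet θb δ f x) < Cardinal.lift.{1} κ := by
  have hreg := lift_isRegular hκ
  have hale : ℵ₀ ≤ Cardinal.lift.{1} κ := hreg.aleph0_le
  have haltκ : ℵ₀ < Cardinal.lift.{1} κ := by
    rw [← Cardinal.lift_aleph0.{1,0}]
    exact Cardinal.lift_lt.2 hκω
  have hgl : #↥(goodLists θb δ x) < Cardinal.lift.{1} κ :=
    (mk_lists_le _).trans_lt (max_lt haltκ hE)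
  have hU : #↥(⋃ l : ↥(goodLists θb δ x), f l.1) < Cardinal.lift.{1} κ := by
    refine (Cardinal.mk_iUnion_le _).trans_lt (Cardinal.mul_lt_of_lt hale hgl ?_)
    exact Cardinal.iSup_lt_of_isRegular hreg hgl fun l => (hf l.1).2
  calc #↥(stepSet θb δ f x)
      ≤ #↥(x ∪ ⋃ l : ↥(goodLists θb δ x), f l.1) + 1 := Cardinal.mk_insert_le
    _ ≤ (#↥x + #↥(⋃ l : ↥(goodLists θb δ x), f l.1)) + 1 := by
        exact add_le_add_left (Cardinal.mk_union_le _ _) 1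
    _ < Cardinal.lift.{1} κ :=
        Cardinal.add_lt_of_lt hale (Cardinal.add_lt_of_lt hale hx hU)
          (Cardinal.one_lt_aleph0.trans haltκ)

lemma chain_card {κ θ : Cardinal.{0}} {δ lam : Ordinal.{0}} {θb : Cardinal.{0}}
    (hκ : κ.IsRegular) (hκω : ℵ₀ < κ)
    (hC : ∀ μ : Cardinal.{0}, μ < κ → μ.ord ≤ δ →
      #↥(PSet (thetaBar κ θ) μ.ord) < Cardinal.lift.{1} κ)
    (hθb : θb ≤ thetaBar κ θ)
    {f : List (Set Ordinal.{0}) → Set Ordinal.{0}} (hf : ∀ l, f l ∈ PSet κ lam)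
    {ρ : Cardinal.{0}} (hρκ : ρ < κ) :
    ∀ i, i ≤ ρ.ord → #↥(chain θb δ f i) < Cardinal.lift.{1} κ := by
  intro i
  induction i using Ordinal.induction with
  | h i IH =>
    intro hle
    rw [chain_eq]
    have hidx : #↥(Set.Iio i) < Cardinal.lift.{1} κ := by
      rw [Ordinal.mk_Iio_ordinal]
      have hcard : i.card ≤ ρ := by
        rw [← Cardinal.card_ord ρ]
        exact Ordinal.card_le_card hle
      exact Cardinal.lift_lt.2 (hcard.trans_lt hρκ)
    have hprev : #↥(⋃ j : ↥(Set.Iio i), chain θb δ f j.1) < Cardinal.lift.{1} κ := by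
      refine (Cardinal.mk_iUnion_le _).trans_lt
        (Cardinal.mul_lt_of_lt (lift_isRegular hκ).aleph0_le hidx
          (Cardinal.iSup_lt_of_isRegular (lift_isRegular hκ) hidx fun j =>
            IH j.1 j.2 ((le_of_lt j.2).trans hle)))
    exact stepSet_card hκ hκω hf _ hprev (Ecand_card hC hθb _ hprev)

lemma chain_subset {κ : Cardinal.{0}} {θb : Cardinal.{0}} {δ lam : Ordinal.{0}}
    (hlam : (0 : Ordinal.{0}) < lam)
    {f : List (Set Ordinal.{0}) → Set Ordinal.{0}} (hf : ∀ l, f l ∈ PSet κ lam) :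
    ∀ i, chain θb δ f i ⊆ Set.Iio lam := by
  intro i
  induction i using Ordinal.induction with
  | h i IH =>
    rw [chain_eq]
    intro ξ hξ
    rcases Set.mem_insert_iff.1 hξ with rfl | hξ
    · exact hlam
    rcases (Set.mem_union _ _ _).1 hξ with hξ | hξ
    · obtain ⟨j, hmem⟩ := Set.mem_iUnion.1 hξ
      exact IH j.1 j.2 hmem
    · obtain ⟨lw, hmem⟩ := Set.mem_iUnion.1 hξ
      exact (hf lw.1).1 hmem

-- ### properness: existence of an active closed set

lemma exists_closed {κ lam θ : Cardinal.{0}} {δ : Ordinal.{0}}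
    (hκ : κ.IsRegular) (hκω : ℵ₀ < κ) (hkl : κ ≤ lam) (hθ2 : 2 ≤ θ) (hθκ : θ ≤ κ)
    (hδ1 : 1 ≤ δ) (hdl : δ ≤ lam.ord)
    (hcase : δ < κ.ord ∨ θ < κ ∨ ¬ Order.IsSuccLimit κ)
    (hC : ∀ μ : Cardinal.{0}, μ < κ → μ.ord ≤ δ →
      #↥(PSet (thetaBar κ θ) μ.ord) < Cardinal.lift.{1} κ)
    (f : List (Set Ordinal.{0}) → Set Ordinal.{0}) (hf : ∀ l, f l ∈ PSet κ lam.ord) :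
    ∃ a ∈ PSet κ lam.ord, (a ∩ Set.Iio θ.ord).Nonempty ∧
      ∀ l : List (Set Ordinal.{0}), (∀ e ∈ l, inP θ δ a e) → f l ⊆ a := by
  classical
  obtain ⟨ρ, hρreg, hρθb, hρκ⟩ := exists_rho hκω hθκ hcase hC
  set θb := min (thetaBar κ θ) (Order.succ δ.card) with hθbdef
  have hθble : θb ≤ thetaBar κ θ := min_le_left _ _
  have hlam0 : (0 : Ordinal.{0}) < lam.ord := by
    rw [Cardinal.lt_ord]
    simpa using aleph0_pos.trans (hκω.trans_le hkl)
  set a := ⋃ j : ↥(Set.Iio ρ.ord), chain θb δ f j.1 with ha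
  have hidx : #↥(Set.Iio ρ.ord) < Cardinal.lift.{1} κ := by
    rw [mk_Iio_ord]
    exact Cardinal.lift_lt.2 hρκ
  have hacard : #↥a < Cardinal.lift.{1} κ := by
    refine (Cardinal.mk_iUnion_le _).trans_lt
      (Cardinal.mul_lt_of_lt (lift_isRegular hκ).aleph0_le hidx
        (Cardinal.iSup_lt_of_isRegular (lift_isRegular hκ) hidx fun j =>
          chain_card hκ hκω hC hθble hf hρκ j.1 j.2.le))
  have haP : a ∈ PSet κ lam.ord := by
    refine ⟨?_, hacard⟩
    rw [ha]
    exact Set.iUnion_subset fun j => chain_subset hlam0 hf j.1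
  have h0a : (0 : Ordinal.{0}) ∈ a := by
    refine Set.mem_iUnion.2 ⟨⟨0, hρreg.ord_pos⟩, ?_⟩
    rw [chain_eq]
    exact Set.mem_insert _ _
  have h0θ : (0 : Ordinal.{0}) ∈ Set.Iio θ.ord := by
    rw [Set.mem_Iio, Cardinal.lt_ord]
    simpa using lt_of_lt_of_le (by norm_num : (0:Cardinal.{0}) < 2) hθ2
  refine ⟨a, haP, ⟨0, h0a, h0θ⟩, ?_⟩
  intro l hl
  have hentry : ∀ e ∈ l, #↥e < Cardinal.lift.{1} θb ∧ e ⊆ a ∩ Set.Iio δ := by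
    intro e he
    obtain ⟨hsub, hsize⟩ := hl e he
    refine ⟨?_, hsub⟩
    rw [hθbdef, Cardinal.lift_min]
    refine lt_min (mk_lt_thetaBar hκω hθκ hacard hsize) ?_
    have h1 : #↥e ≤ Cardinal.lift.{1} δ.card := by
      rw [← Ordinal.mk_Iio_ordinal]
      exact Cardinal.mk_le_mk_of_subset (hsub.trans inter_subset_right)
    exact h1.trans_lt (by rw [Cardinal.lift_succ]; exact Order.lt_succ _)
  set u := l.foldr (· ∪ ·) ∅ with hu
  have hucard : #↥u < Cardinal.lift.{1} ρ := by
    refine mk_foldr_lt _ ?_ l fun e he => (hentry e he).1.trans_le (Cardinal.lift_le.2 hρθb)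
    rw [← Cardinal.lift_aleph0.{1,0}]
    exact Cardinal.lift_le.2 hρreg.aleph0_le
  have hsub_a : u ⊆ a :=
    foldr_subset l a fun e he => ((hl e he).1).trans inter_subset_left
  obtain ⟨c, hc⟩ := Cardinal.mem_range_lift_of_le hucard.le
  rw [← hc] at hucard
  have hcρ : c < ρ := Cardinal.lift_lt.1 hucard
  obtain ⟨ψ⟩ : Nonempty (ULift.{1,0} c.ord.ToType ≃ ↥u) := by
    rw [← Cardinal.eq, Cardinal.mk_uLift, Cardinal.mk_toType, Cardinal.card_ord, hc]
  have hstage : ∀ ξ : ↥u, ∃ j : Ordinal.{0}, j < ρ.ord ∧ (ξ : Ordinal.{0}) ∈ chain θb δ f j := by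
    intro ξ
    obtain ⟨j, hmem⟩ := Set.mem_iUnion.1 (hsub_a ξ.2)
    exact ⟨j.1, j.2, hmem⟩
  choose st hst1 hst2 using hstage
  set sb := ⨆ k : c.ord.ToType, st (ψ ⟨k⟩) with hsb
  have hsρ : sb < ρ.ord := by
    refine Ordinal.iSup_lt_ord ?_ fun k => hst1 _
    rw [Cardinal.mk_toType, Cardinal.card_ord, hρreg.cof_eq]
    exact hcρ
  have hstages : ∀ ξ : ↥u, (ξ : Ordinal.{0}) ∈ chain θb δ f sb := by
    intro ξ
    have h2 : st (ψ ⟨(ψ.symm ξ).down⟩) ≤ sb := Ordinal.le_iSup _ ((ψ.symm ξ).down)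
    simp only [ULift.up_down, Equiv.apply_symm_apply] at h2
    exact chain_mono θb δ f h2 (hst2 ξ)
  have hgood : l ∈ goodLists θb δ (⋃ j : ↥(Set.Iio (Order.succ sb)), chain θb δ f j.1) := by
    intro e he
    obtain ⟨h1, h2⟩ := hentry e he
    refine ⟨fun ξ hξ => ⟨?_, (h2 hξ).2⟩, h1⟩
    exact Set.mem_iUnion.2 ⟨⟨sb, Order.lt_succ sb⟩, hstages ⟨ξ, subset_foldr l e he hξ⟩⟩
  have hfl : f l ⊆ chain θb δ f (Order.succ sb) := by
    rw [chain_eq]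
    refine subset_trans ?_ (subset_trans subset_union_right (subset_insert _ _))
    exact Set.subset_iUnion_of_subset (⟨l, hgood⟩ : ↥(goodLists θb δ _)) subset_rfl
  have hs1 : Order.succ sb < ρ.ord :=
    (Cardinal.isSuccLimit_ord hρreg.aleph0_le).succ_lt hsρ
  exact hfl.trans (Set.subset_iUnion_of_subset (⟨Order.succ sb, hs1⟩ : ↥(Set.Iio ρ.ord))
    subset_rfl)

-- ### the minimal normal ideal

def Jmin (κ lam θ : Cardinal.{0}) (δ : Ordinal.{0}) : Set (Set (Set Ordinal.{0})) :=
  {B | B ⊆ PSet κ lam.ord ∧ ∃ f : List (Set Ordinal.{0}) → Set Ordinal.{0},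
    (∀ l, f l ∈ PSet κ lam.ord) ∧
    ∀ a ∈ PSet κ lam.ord, (a ∩ Set.Iio θ.ord).Nonempty →
      (∀ l : List (Set Ordinal.{0}), (∀ e ∈ l, inP θ δ a e) → f l ⊆ a) → a ∉ B}

lemma Ikl_subset_Jmin (κ lam θ : Cardinal.{0}) (δ : Ordinal.{0}) :
    Ikl κ lam.ord ⊆ Jmin κ lam θ δ := by
  rintro B ⟨hBP, a₀, ha₀, hB⟩
  refine ⟨hBP, fun _ => a₀, fun _ => ha₀, fun a _ _ hcl hmem => ?_⟩
  exact hB a hmem (hcl [] (by simp))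

lemma Jmin_sUnion {κ lam θ : Cardinal.{0}} {δ : Ordinal.{0}} (hκ : κ.IsRegular)
    (Y : Set (Set (Set Ordinal.{0}))) (hY : Y ⊆ Jmin κ lam θ δ)
    (hYc : #↥Y < Cardinal.lift.{1} κ) : ⋃₀ Y ∈ Jmin κ lam θ δ := by
  classical
  have hw : ∀ B : ↥Y, ∃ f : List (Set Ordinal.{0}) → Set Ordinal.{0},
      (∀ l, f l ∈ PSet κ lam.ord) ∧
      ∀ a ∈ PSet κ lam.ord, (a ∩ Set.Iio θ.ord).Nonempty →
        (∀ l : List (Set Ordinal.{0}), (∀ e ∈ l, inP θ δ a e) → f l ⊆ a) →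
          a ∉ (B : Set (Set Ordinal.{0})) :=
    fun B => (hY B.2).2
  choose F hF1 hF2 using hw
  refine ⟨Set.sUnion_subset fun B hB => (hY hB).1, fun l => ⋃ B : ↥Y, F B l, ?_, ?_⟩
  · intro l
    constructor
    · exact Set.iUnion_subset fun B => (hF1 B l).1
    · refine (Cardinal.mk_iUnion_le _).trans_lt
        (Cardinal.mul_lt_of_lt (lift_isRegular hκ).aleph0_le hYc
          (Cardinal.iSup_lt_of_isRegular (lift_isRegular hκ) hYc fun B => (hF1 B l).2))
  · intro a haP hact hcl hmem
    obtain ⟨B, hBY, haB⟩ := Set.mem_sUnion.1 hmem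
    refine hF2 ⟨B, hBY⟩ a haP hact (fun l hl => ?_) haB
    exact (Set.subset_iUnion (fun B : ↥Y => F B l) ⟨B, hBY⟩).trans (hcl l hl)

lemma Jmin_normal (κ lam θ : Cardinal.{0}) (δ : Ordinal.{0}) (hκω : ℵ₀ < κ) (hθ2 : 2 ≤ θ) :
    IsNormal κ lam.ord θ δ (Jmin κ lam θ δ) := by
  classical
  have h0κ : (0 : Cardinal.{1}) < Cardinal.lift.{1} κ := by
    rw [show (0 : Cardinal.{1}) = Cardinal.lift.{1} (0 : Cardinal.{0}) by simp,
      Cardinal.lift_lt]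
    exact (aleph0_pos : (0:Cardinal.{0}) < ℵ₀).trans hκω
  have hempP : (∅ : Set Ordinal.{0}) ∈ PSet κ lam.ord :=
    ⟨empty_subset _, by rw [Cardinal.mk_emptyCollection]; exact h0κ⟩
  apply Set.eq_of_subset_of_subset
  · -- J ⊆ nabla J
    rintro B hB
    refine ⟨fun _ => B, fun _ _ => hB, ?_⟩
    intro a haB
    have haP : a ∈ PSet κ lam.ord := hB.1 haB
    rcases Set.eq_empty_or_nonempty (a ∩ Set.Iio θ.ord) with hemp | hne
    · exact Or.inl ⟨haP, hemp⟩
    · refine Or.inr (Set.mem_biUnion (show (∅ : Set Ordinal.{0}) ∈ PSet θ δ from ?_) ?_)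
      · refine ⟨empty_subset _, ?_⟩
        rw [Cardinal.mk_emptyCollection]
        have h2 : (0:Cardinal.{1}) < Cardinal.lift.{1} θ := by
          simpa using lt_of_lt_of_le (by norm_num : (0:Cardinal.{0}) < 2) hθ2
        exact h2
      · refine ⟨haB, empty_subset _, ?_⟩
        rw [Cardinal.mk_emptyCollection, pos_iff_ne_zero]
        exact Cardinal.mk_ne_zero_iff.2 hne.to_subtype
  · -- nabla J ⊆ J
    rintro B ⟨F, hF, hBsub⟩
    have hBP : B ⊆ PSet κ lam.ord := by
      intro b hb
      rcases hBsub hb with h | h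
      · exact h.1
      · obtain ⟨e, he, hb2, _⟩ := Set.mem_iUnion₂.1 h
        exact (hF e he).1 hb2
    have hw : ∀ e : ↥(PSet θ δ), ∃ g : List (Set Ordinal.{0}) → Set Ordinal.{0},
        (∀ l, g l ∈ PSet κ lam.ord) ∧
        ∀ a ∈ PSet κ lam.ord, (a ∩ Set.Iio θ.ord).Nonempty →
          (∀ l : List (Set Ordinal.{0}), (∀ e' ∈ l, inP θ δ a e') → g l ⊆ a) →
            a ∉ F e.1 :=
      fun e => (hF e.1 e.2).2
    choose g hg1 hg2 using hw
    set f0 : List (Set Ordinal.{0}) → Set Ordinal.{0} := fun l =>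
      List.casesOn l (∅ : Set Ordinal.{0})
        (fun e l' => if h : e ∈ PSet θ δ then g ⟨e, h⟩ l' else ∅) with hf0
    have hf0nil : f0 [] = ∅ := rfl
    have hf0cons : ∀ e l', f0 (e :: l') =
        if h : e ∈ PSet θ δ then g ⟨e, h⟩ l' else ∅ := fun _ _ => rfl
    refine ⟨hBP, f0, ?_, ?_⟩
    · intro l
      match l with
      | [] => exact hempP
      | e :: l' =>
        rw [hf0cons]
        by_cases h : e ∈ PSet θ δ
        · rw [dif_pos h]; exact hg1 ⟨e, h⟩ l'
        · rw [dif_neg h]; exact hempP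
    · intro a haP hact hcl hmem
      rcases hBsub hmem with h | h
      · exact absurd h.2 hact.ne_empty
      · obtain ⟨e, he, haF, hinP⟩ := Set.mem_iUnion₂.1 h
        refine hg2 ⟨e, he⟩ a haP hact (fun l' hl' => ?_) haF
        have hstep := hcl (e :: l') (fun e' he' => by
          rcases List.mem_cons.1 he' with rfl | h'
          · exact hinP
          · exact hl' e' h')
        rwa [hf0cons, dif_pos he] at hstep

-- ### assembled ideal facts

lemma Jmin_univ_not_mem {κ lam θ : Cardinal.{0}} {δ : Ordinal.{0}}
    (hκ : κ.IsRegular) (hκω : ℵ₀ < κ) (hkl : κ ≤ lam) (hθ2 : 2 ≤ θ) (hθκ : θ ≤ κ)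
    (hδ1 : 1 ≤ δ) (hdl : δ ≤ lam.ord)
    (hcase : δ < κ.ord ∨ θ < κ ∨ ¬ Order.IsSuccLimit κ)
    (hC : ∀ μ : Cardinal.{0}, μ < κ → μ.ord ≤ δ →
      #↥(PSet (thetaBar κ θ) μ.ord) < Cardinal.lift.{1} κ) :
    PSet κ lam.ord ∉ Jmin κ lam θ δ := by
  rintro ⟨-, f, hf1, hf2⟩
  obtain ⟨a, haP, hact, hcl⟩ := exists_closed hκ hκω hkl hθ2 hθκ hδ1 hdl hcase hC f hf1
  exact hf2 a haP hact hcl haP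

lemma Jmin_isNormalIdeal {κ lam θ : Cardinal.{0}} {δ : Ordinal.{0}}
    (hκ : κ.IsRegular) (hκω : ℵ₀ < κ) (hkl : κ ≤ lam) (hθ2 : 2 ≤ θ) (hθκ : θ ≤ κ)
    (hδ1 : 1 ≤ δ) (hdl : δ ≤ lam.ord)
    (hcase : δ < κ.ord ∨ θ < κ ∨ ¬ Order.IsSuccLimit κ)
    (hC : ∀ μ : Cardinal.{0}, μ < κ → μ.ord ≤ δ →
      #↥(PSet (thetaBar κ θ) μ.ord) < Cardinal.lift.{1} κ) :
    IsNormalIdeal κ lam.ord θ δ (Jmin κ lam θ δ) := by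
  refine ⟨⟨fun B hB => hB.1, ?_, fun Y hY _ hYc => Jmin_sUnion hκ Y hY hYc,
    Ikl_subset_Jmin κ lam θ δ, Jmin_univ_not_mem hκ hκω hkl hθ2 hθκ hδ1 hdl hcase hC⟩,
    Jmin_normal κ lam θ δ hκω hθ2⟩
  rintro B ⟨hB1, f, hf1, hf2⟩ C hCB
  exact ⟨hCB.trans hB1, f, hf1, fun a h1 h2 h3 hmem => hf2 a h1 h2 h3 (hCB hmem)⟩

-- ### forward direction

lemma forward {κ lam θ : Cardinal.{0}} {δ : Ordinal.{0}}
    (hκ : κ.IsRegular) (hκω : ℵ₀ < κ) (hkl : κ ≤ lam) (hθ2 : 2 ≤ θ) (hθκ : θ ≤ κ)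
    (hδ1 : 1 ≤ δ) (hdl : δ ≤ lam.ord) {J : Set (Set (Set Ordinal.{0}))}
    (hJ : IsNormalIdeal κ lam.ord θ δ J)
    (μ : Cardinal.{0}) (hμκ : μ < κ) (hμδ : μ.ord ≤ δ) :
    #↥(PSet (thetaBar κ θ) μ.ord) < Cardinal.lift.{1} κ := by
  by_contra hbig
  push_neg at hbig
  classical
  set tb := thetaBar κ θ with htb
  set ν := min tb (Order.succ μ) with hν
  have hνθ : ν ≤ θ := (min_le_left _ _).trans (thetaBar_le κ θ hκω hθκ)
  have hνκ : ν < κ := by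
    by_cases hsl : Order.IsSuccLimit κ
    · have hsμ : Order.succ μ < κ := hsl.succ_lt hμκ
      exact (min_le_right tb (Order.succ μ)).trans_lt hsμ
    · by_cases hθlt : θ < κ
      · refine (min_le_left _ _).trans_lt ?_
        rw [htb, thetaBar_eq_of κ θ (Or.inl hθlt)]
        exact hθlt
      · have hsucc := succ_thetaBar κ θ hκω (fun hx => hx.elim hθlt hsl)
        have h2 : thetaBar κ θ < κ := by
          conv_rhs => rw [← hsucc]
          exact Order.lt_succ (thetaBar κ θ)
        exact (min_le_left tb (Order.succ μ)).trans_lt h2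
  set s₀ := Set.Iio ν.ord ∪ Set.Iio μ.ord with hs₀
  have hs₀P : s₀ ∈ PSet κ lam.ord := by
    constructor
    · apply union_subset
      · exact fun ξ hξ => lt_of_lt_of_le hξ (Cardinal.ord_le_ord.2 (hνκ.le.trans hkl))
      · exact fun ξ hξ => lt_of_lt_of_le hξ (hμδ.trans hdl)
    · refine (Cardinal.mk_union_le _ _).trans_lt
        (Cardinal.add_lt_of_lt (lift_isRegular hκ).aleph0_le ?_ ?_)
      · rw [mk_Iio_ord]; exact Cardinal.lift_lt.2 hνκ
      · rw [mk_Iio_ord]; exact Cardinal.lift_lt.2 hμκ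
  obtain ⟨G⟩ : Nonempty (↥(Set.Iio κ.ord) ↪ ↥(PSet tb μ.ord)) := by
    rw [← Cardinal.le_def, mk_Iio_ord]
    exact hbig
  set E : Set Ordinal.{0} → Set Ordinal.{0} :=
    fun e => {ξ | ∃ h : ξ ∈ Set.Iio κ.ord, (G ⟨ξ, h⟩ : Set Ordinal.{0}) = e} with hE
  have hxP : ∀ e, s₀ ∪ E e ∈ PSet κ lam.ord := by
    intro e
    constructor
    · apply union_subset hs₀P.1
      rintro ξ ⟨hξ, -⟩
      exact lt_of_lt_of_le hξ (Cardinal.ord_le_ord.2 hkl)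
    · refine (Cardinal.mk_union_le _ _).trans_lt
        (Cardinal.add_lt_of_lt (lift_isRegular hκ).aleph0_le hs₀P.2 ?_)
      have h1 : #↥(E e) ≤ 1 := by
        rw [Cardinal.mk_le_one_iff_set_subsingleton]
        rintro ξ ⟨h1, he1⟩ ξ' ⟨h1', he1'⟩
        have hGG : G ⟨ξ, h1⟩ = G ⟨ξ', h1'⟩ := Subtype.ext (he1.trans he1'.symm)
        exact congrArg Subtype.val (G.injective hGG)
      exact h1.trans_lt (Cardinal.one_lt_aleph0.trans_le (lift_isRegular hκ).aleph0_le)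
  set F : Set Ordinal.{0} → Set (Set Ordinal.{0}) :=
    fun e => {a | a ∈ PSet κ lam.ord ∧ ¬ s₀ ∪ E e ⊆ a} with hF
  have hFIkl : ∀ e, F e ∈ Ikl κ lam.ord :=
    fun e => ⟨fun a ha => ha.1, s₀ ∪ E e, hxP e, fun b hb hsub => hb.2 hsub⟩
  have hempPθδ : (∅ : Set Ordinal.{0}) ∈ PSet θ δ := by
    refine ⟨empty_subset _, ?_⟩
    rw [Cardinal.mk_emptyCollection]
    simpa using lt_of_lt_of_le (by norm_num : (0:Cardinal.{0}) < 2) hθ2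
  have hcover : PSet κ lam.ord ⊆
      {a | a ∈ PSet κ lam.ord ∧ a ∩ Set.Iio θ.ord = ∅} ∪
        ⋃ e ∈ PSet θ δ, {a | a ∈ F e ∧ inP θ δ a e} := by
    intro a haP
    rcases Set.eq_empty_or_nonempty (a ∩ Set.Iio θ.ord) with hemp | hne
    · exact Or.inl ⟨haP, hemp⟩
    have hposa : (0 : Cardinal.{1}) < #↥(a ∩ Set.Iio θ.ord) := by
      rw [pos_iff_ne_zero]
      exact Cardinal.mk_ne_zero_iff.2 hne.to_subtype
    by_cases hs : s₀ ⊆ a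
    · have hnot : ¬ Set.Iio κ.ord ⊆ a := by
        intro hcon
        have hle := Cardinal.mk_le_mk_of_subset hcon
        rw [mk_Iio_ord] at hle
        exact absurd (hle.trans_lt haP.2) (lt_irrefl _)
      obtain ⟨ξ, hξκ, hξa⟩ := not_subset.1 hnot
      set e := (G ⟨ξ, hξκ⟩ : Set Ordinal.{0}) with he
      have heP : e ∈ PSet tb μ.ord := (G ⟨ξ, hξκ⟩).2
      have heμ : e ⊆ Set.Iio μ.ord := heP.1
      have heμa : e ⊆ a := fun ζ hζ => hs (Or.inr (heμ hζ))
      have hecard : #↥e < Cardinal.lift.{1} ν := by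
        rw [hν, Cardinal.lift_min]
        refine lt_min heP.2 ?_
        have h1 : #↥e ≤ Cardinal.lift.{1} μ := by
          rw [← mk_Iio_ord]
          exact Cardinal.mk_le_mk_of_subset heμ
        refine h1.trans_lt ?_
        rw [Cardinal.lift_succ]
        exact Order.lt_succ _
      have hνa : Set.Iio ν.ord ⊆ a ∩ Set.Iio θ.ord := fun ζ hζ =>
        ⟨hs (Or.inl hζ), lt_of_lt_of_le hζ (Cardinal.ord_le_ord.2 hνθ)⟩
      have hinP : inP θ δ a e := by
        refine ⟨fun ζ hζ => ⟨heμa hζ, lt_of_lt_of_le (heμ hζ) hμδ⟩, ?_⟩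
        refine hecard.trans_le ?_
        rw [← mk_Iio_ord]
        exact Cardinal.mk_le_mk_of_subset hνa
      refine Or.inr (Set.mem_biUnion (show e ∈ PSet θ δ from ?_) ⟨⟨haP, ?_⟩, hinP⟩)
      · exact ⟨fun ζ hζ => lt_of_lt_of_le (heμ hζ) hμδ,
          heP.2.trans_le (Cardinal.lift_le.2 (thetaBar_le κ θ hκω hθκ))⟩
      · intro hcon
        exact hξa (hcon (Or.inr ⟨hξκ, rfl⟩))
    · refine Or.inr (Set.mem_biUnion hempPθδ ⟨⟨haP, ?_⟩, empty_subset _, ?_⟩)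
      · intro hcon
        exact hs fun ζ hζ => hcon (Or.inl hζ)
      · rw [Cardinal.mk_emptyCollection]
        exact hposa
  have hPmem : PSet κ lam.ord ∈ nabla κ lam.ord θ δ J :=
    ⟨F, fun e _ => hJ.1.nonCofinal_subset (hFIkl e), hcover⟩
  rw [← hJ.2] at hPmem
  exact hJ.1.univ_not_mem hPmem

/-- Assume `κ > ω`, and assume that `δ < κ`, or `θ < κ`, or `κ` is not a limit
cardinal. Then there exists a `[δ]^{<θ}`-normal ideal on `P_κ(λ)` iff `|P_θ̄(μ)| < κ` for every
cardinal `μ` with `μ < κ` and `μ ≤ δ`. -/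
theorem stmt4 (κ lam θ : Cardinal.{0}) (δ : Ordinal.{0})
    (hκ : κ.IsRegular) (hκω : ℵ₀ < κ) (hkl : κ ≤ lam) (hθ2 : 2 ≤ θ) (hθκ : θ ≤ κ)
    (hδ1 : 1 ≤ δ) (hdl : δ ≤ lam.ord)
    (hcase : δ < κ.ord ∨ θ < κ ∨ ¬ Order.IsSuccLimit κ) :
    (∃ J, IsNormalIdeal κ lam.ord θ δ J) ↔
      ∀ μ : Cardinal.{0}, μ < κ → μ.ord ≤ δ →
        #↥(PSet (thetaBar κ θ) μ.ord) < Cardinal.lift.{1} κ := by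

  constructor
  · rintro ⟨J, hJ⟩ μ hμκ hμδ
    exact forward hκ hκω hkl hθ2 hθκ hδ1 hdl hJ μ hμκ hμδ
  · intro hC
    exact ⟨Jmin κ lam θ δ, Jmin_isNormalIdeal hκ hκω hkl hθ2 hθκ hδ1 hdl hcase hC⟩

end PklNormal
end

section
/- Assume κ = ω. Then there exists a [δ]^{<θ}-normal ideal on P_ω(λ) if and only if δ < ω. -/
open Cardinal Set

namespace PklNormal

/-- Auxiliary: cardinality below `lift ℵ₀` is the same as finiteness. -/
lemma lt_lift_aleph0_iff {α : Type 1} {s : Set α} :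
    #↥s < Cardinal.lift.{1} (ℵ₀ : Cardinal.{0}) ↔ s.Finite := by
  rw [Cardinal.lift_aleph0.{1,0}]
  exact Cardinal.lt_aleph0_iff_set_finite

lemma mk_pos_of_nonempty {α : Type 1} {s : Set α} (h : s.Nonempty) : 0 < #↥s := by
  rw [pos_iff_ne_zero, Cardinal.mk_ne_zero_iff]
  exact h.to_subtype

lemma one_lt_ord_of_two_le {θ : Cardinal.{0}} (h : 2 ≤ θ) : (1 : Ordinal.{0}) < θ.ord := by
  have h2 : ((2:ℕ):Cardinal).ord ≤ θ.ord := Cardinal.ord_le_ord.mpr (by norm_num; exact h)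
  rw [Cardinal.ord_nat] at h2
  refine lt_of_lt_of_le ?_ h2
  norm_num

lemma zero_lt_ord_of_two_le {θ : Cardinal.{0}} (h : 2 ≤ θ) : (0 : Ordinal.{0}) < θ.ord :=
  lt_trans zero_lt_one (one_lt_ord_of_two_le h)

lemma one_lt_lift_of_two_le {θ : Cardinal.{0}} (h : 2 ≤ θ) :
    (1 : Cardinal.{1}) < Cardinal.lift.{1} θ := by
  have := Cardinal.lift_le.{1}.mpr h
  rw [Cardinal.lift_ofNat] at this
  exact lt_of_lt_of_le one_lt_two this

/-- `∅ ∈ P_θ(δ)` provided `2 ≤ θ`. -/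
lemma empty_mem_PSet {θ : Cardinal.{0}} {δ : Ordinal.{0}} (h : 2 ≤ θ) :
    (∅ : Set Ordinal.{0}) ∈ PSet θ δ := by
  refine ⟨Set.empty_subset _, ?_⟩
  rw [Cardinal.mk_emptyCollection]
  exact lt_trans zero_lt_one (one_lt_lift_of_two_le h)

lemma inP_empty {θ : Cardinal.{0}} {δ : Ordinal.{0}} {a : Set Ordinal.{0}}
    (h : (a ∩ Set.Iio θ.ord).Nonempty) : inP θ δ a ∅ := by
  refine ⟨Set.empty_subset _, ?_⟩
  rw [Cardinal.mk_emptyCollection]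
  exact mk_pos_of_nonempty h

lemma card_Iio_finite {δ : Ordinal.{0}} (h : δ < Ordinal.omega0) : (Set.Iio δ).Finite := by
  rw [← Cardinal.lt_aleph0_iff_set_finite, Ordinal.mk_Iio_ordinal, Cardinal.lift_lt_aleph0]
  obtain ⟨n, rfl⟩ := Ordinal.lt_omega0.mp h
  simpa using Cardinal.nat_lt_aleph0 n

lemma mem_PSet_finite {κ : Cardinal.{0}} {l : Ordinal.{0}} {a : Set Ordinal.{0}}
    (hκ : κ ≤ ℵ₀) (h : a ∈ PSet κ l) : a.Finite := by
  refine lt_lift_aleph0_iff.mp (lt_of_lt_of_le h.2 ?_)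
  exact Cardinal.lift_le.mpr hκ

/-- singletons below `l` are members of `P_ℵ₀(l)`. -/
lemma singleton_mem_PSet_aleph0 {l α : Ordinal.{0}} (h : α < l) :
    ({α} : Set Ordinal.{0}) ∈ PSet ℵ₀ l :=
  ⟨Set.singleton_subset_iff.mpr h, lt_lift_aleph0_iff.mpr (Set.finite_singleton α)⟩

/-- For any ideal `J`, the set of `a` omitting a fixed `α < l` belongs to `J`. -/
lemma D_mem {l : Ordinal.{0}} {J : Set (Set (Set Ordinal.{0}))}
    (hJ : IsIdeal ℵ₀ l J) {α : Ordinal.{0}} (hα : α < l) :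
    {a | a ∈ PSet ℵ₀ l ∧ α ∉ a} ∈ J := by
  refine hJ.nonCofinal_subset ⟨fun a ha => ha.1, {α}, singleton_mem_PSet_aleph0 hα, ?_⟩
  intro b hb hsub
  exact hb.2 (hsub rfl)

lemma union_mem {κ : Cardinal.{0}} {l : Ordinal.{0}} {J : Set (Set (Set Ordinal.{0}))}
    (hJ : IsIdeal ℵ₀ l J) {B C : Set (Set Ordinal.{0})} (hB : B ∈ J) (hC : C ∈ J) :
    B ∪ C ∈ J := by
  have h := hJ.sUnion_mem {B, C} ?_ ⟨B, Set.mem_insert _ _⟩ ?_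
  · rwa [Set.sUnion_pair] at h
  · intro X hX
    rcases hX with rfl | hX
    · exact hB
    · rw [Set.mem_singleton_iff] at hX; subst hX; exact hC
  · exact lt_lift_aleph0_iff.mpr (Set.toFinite _)

/-- Assume `κ = ω`. Then there exists a `[δ]^{<θ}`-normal ideal on `P_ω(λ)` iff
`δ < ω`. -/
theorem stmt6 (lam θ : Cardinal.{0}) (δ : Ordinal.{0})
    (hkl : ℵ₀ ≤ lam) (hθ2 : 2 ≤ θ) (hθκ : θ ≤ ℵ₀)
    (hδ1 : 1 ≤ δ) (hdl : δ ≤ lam.ord) :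
    (∃ J, IsNormalIdeal ℵ₀ lam.ord θ δ J) ↔ δ < Ordinal.omega0 := by
  have hord1 : (1 : Ordinal.{0}) < θ.ord := one_lt_ord_of_two_le hθ2
  have hord0 : (0 : Ordinal.{0}) < θ.ord := zero_lt_ord_of_two_le hθ2
  have hωl : Ordinal.omega0 ≤ lam.ord := by
    rw [← Cardinal.ord_aleph0]; exact Cardinal.ord_le_ord.mpr hkl
  constructor
  · rintro ⟨J, hJid, hJn⟩
    by_contra hδ
    push_neg at hδ
    -- hδ : Ordinal.omega0 ≤ δ
    exfalso
    set D : Ordinal.{0} → Set (Set Ordinal.{0}) :=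
      fun α => {a | a ∈ PSet ℵ₀ lam.ord ∧ α ∉ a} with hDdef
    have hD : ∀ α < lam.ord, D α ∈ J := fun α hα => D_mem hJid hα
    set F : Set Ordinal.{0} → Set (Set Ordinal.{0}) :=
      fun e => ⋃₀ (insert (D 0) (insert (D 1)
        ((fun x => D (x + 1)) '' (e ∩ Set.Iio Ordinal.omega0)))) with hFdef
    have hFmem : ∀ e ∈ PSet θ δ, F e ∈ J := by
      intro e he
      refine hJid.sUnion_mem _ ?_ ⟨D 0, Set.mem_insert _ _⟩ ?_
      · intro X hX
        rcases hX with rfl | hX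
        · exact hD 0 (lt_of_lt_of_le Ordinal.omega0_pos hωl)
        rcases hX with rfl | hX
        · exact hD 1 (lt_of_lt_of_le (Ordinal.one_lt_omega0) hωl)
        · obtain ⟨x, hx, rfl⟩ := hX
          refine hD (x + 1) (lt_of_lt_of_le ?_ hωl)
          rw [Ordinal.add_one_eq_succ]
          exact Ordinal.isSuccLimit_omega0.succ_lt hx.2
      · refine lt_lift_aleph0_iff.mpr ?_
        have hef : e.Finite := mem_PSet_finite hθκ he
        exact ((hef.inter_of_left _).image _).insert _ |>.insert _
    have hcov : PSet ℵ₀ lam.ord ∈ nabla ℵ₀ lam.ord θ δ J := by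
      refine ⟨F, hFmem, ?_⟩
      intro a ha
      by_cases h0 : a ∩ Set.Iio θ.ord = ∅
      · exact Or.inl ⟨ha, h0⟩
      have hane : (a ∩ Set.Iio θ.ord).Nonempty := Set.nonempty_iff_ne_empty.mpr h0
      right
      by_cases h01 : (0 : Ordinal) ∈ a ∧ (1 : Ordinal) ∈ a
      · -- use the largest natural in a
        have haf : a.Finite := mem_PSet_finite le_rfl ha
        have hsne : (a ∩ Set.Iio Ordinal.omega0).Nonempty :=
          ⟨0, h01.1, Ordinal.omega0_pos⟩
        obtain ⟨n, hn, hmax⟩ :=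
          Set.exists_max_image (a ∩ Set.Iio Ordinal.omega0) id (haf.inter_of_left _) hsne
        have hnδ : n < δ := lt_of_lt_of_le hn.2 hδ
        have hsuc : n + 1 < Ordinal.omega0 := by
          rw [Ordinal.add_one_eq_succ]
          exact Ordinal.isSuccLimit_omega0.succ_lt hn.2
        refine Set.mem_iUnion₂.mpr ⟨{n}, ?_, ?_, ?_⟩
        · exact ⟨Set.singleton_subset_iff.mpr hnδ, by
            rw [Cardinal.mk_singleton]; exact one_lt_lift_of_two_le hθ2⟩
        · -- a ∈ F {n}, via D (n+1)
          refine ⟨D (n + 1), ?_, ha, fun hmem => ?_⟩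
          · refine Set.mem_insert_iff.mpr (Or.inr (Set.mem_insert_iff.mpr (Or.inr ?_)))
            exact ⟨n, ⟨rfl, hn.2⟩, rfl⟩
          · have := hmax (n + 1) ⟨hmem, hsuc⟩
            simp only [id] at this
            have hlt : n < n + 1 := by
              rw [Ordinal.add_one_eq_succ]; exact Order.lt_succ n
            exact absurd this (not_le_of_gt hlt)
        · -- inP θ δ a {n}
          refine ⟨Set.singleton_subset_iff.mpr ⟨hn.1, hnδ⟩, ?_⟩
          rw [Cardinal.mk_singleton]
          have hsub : ({0, 1} : Set Ordinal.{0}) ⊆ a ∩ Set.Iio θ.ord := by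
            intro x hx
            rcases hx with rfl | hx
            · exact ⟨h01.1, hord0⟩
            · rw [Set.mem_singleton_iff] at hx; subst hx; exact ⟨h01.2, hord1⟩
          have h2 : (2 : Cardinal.{1}) ≤ #↥(a ∩ Set.Iio θ.ord) := by
            have := Cardinal.mk_le_mk_of_subset hsub
            rwa [Cardinal.mk_insert (by simp : (0:Ordinal.{0}) ∉ ({1} : Set Ordinal.{0})),
              Cardinal.mk_singleton, one_add_one_eq_two] at this
          exact lt_of_lt_of_le one_lt_two h2
      · -- 0 ∉ a or 1 ∉ a : use e = ∅
        refine Set.mem_iUnion₂.mpr ⟨∅, empty_mem_PSet hθ2, ?_, inP_empty hane⟩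
        rw [not_and_or] at h01
        rcases h01 with h01 | h01
        · exact ⟨D 0, Set.mem_insert _ _, ha, h01⟩
        · exact ⟨D 1, Set.mem_insert_iff.mpr (Or.inr (Set.mem_insert _ _)), ha, h01⟩
    rw [← hJn] at hcov
    exact hJid.univ_not_mem hcov
  · intro hδ
    refine ⟨Ikl ℵ₀ lam.ord, ?_, ?_⟩
    · -- Ikl is an ideal
      refine ⟨fun B hB => hB.1, ?_, ?_, fun B hB => hB, ?_⟩
      · rintro B ⟨hBs, a, ha, hw⟩ C hCB
        exact ⟨hCB.trans hBs, a, ha, fun b hb => hw b (hCB hb)⟩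
      · intro Y hY hYne hYc
        have hYf : Y.Finite := lt_lift_aleph0_iff.mp hYc
        haveI : Finite ↥Y := hYf.to_subtype
        have hch : ∀ B : Y, ∃ a ∈ PSet ℵ₀ lam.ord, ∀ b ∈ (B : Set (Set Ordinal.{0})), ¬ a ⊆ b :=
          fun B => (hY B.2).2
        choose w hw1 hw2 using hch
        refine ⟨Set.sUnion_subset (fun B hB => (hY hB).1), ⋃ B : Y, w B, ?_, ?_⟩
        · constructor
          · exact Set.iUnion_subset (fun B => (hw1 B).1)
          · refine lt_lift_aleph0_iff.mpr (Set.finite_iUnion ?_)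
            intro B
            exact lt_lift_aleph0_iff.mp (hw1 B).2
        · rintro b ⟨B, hB, hbB⟩ hsub
          exact hw2 ⟨B, hB⟩ b hbB ((Set.subset_iUnion (fun B : Y => w B) ⟨B, hB⟩).trans hsub)
      · rintro ⟨-, a, ha, hw⟩
        exact hw a ha (subset_refl a)
    · -- Ikl is normal
      apply Set.Subset.antisymm
      · intro B hB
        refine ⟨fun _ => B, fun e _ => hB, ?_⟩
        intro a haB
        by_cases h0 : a ∩ Set.Iio θ.ord = ∅
        · exact Or.inl ⟨hB.1 haB, h0⟩
        · exact Or.inr (Set.mem_iUnion₂.mpr ⟨∅, empty_mem_PSet hθ2,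
            haB, inP_empty (Set.nonempty_iff_ne_empty.mpr h0)⟩)
      · rintro B ⟨F, hF, hcov⟩
        have hPfin : (PSet θ δ).Finite := by
          refine Set.Finite.subset (card_Iio_finite hδ).finite_subsets ?_
          intro e he
          exact he.1
        haveI : Finite ↥(PSet θ δ) := hPfin.to_subtype
        have hch : ∀ e : PSet θ δ, ∃ a ∈ PSet ℵ₀ lam.ord,
            ∀ b ∈ F (e : Set Ordinal.{0}), ¬ a ⊆ b := fun e => (hF e e.2).2
        choose w hw1 hw2 using hch
        constructor
        · intro a haB
          rcases hcov haB with h | h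
          · exact h.1
          · obtain ⟨e, he, hae, -⟩ := Set.mem_iUnion₂.mp h
            exact (hF e he).1 hae
        · refine ⟨insert 0 (⋃ e : PSet θ δ, w e), ⟨?_, ?_⟩, ?_⟩
          · refine Set.insert_subset (lt_of_lt_of_le Ordinal.omega0_pos hωl) ?_
            exact Set.iUnion_subset (fun e => (hw1 e).1)
          · refine lt_lift_aleph0_iff.mpr (Set.Finite.insert _ (Set.finite_iUnion ?_))
            intro e
            exact lt_lift_aleph0_iff.mp (hw1 e).2
          · intro b hbB hsub
            have hb0 : (0 : Ordinal) ∈ b := hsub (Set.mem_insert _ _)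
            rcases hcov hbB with h | h
            · exact absurd h.2 (Set.nonempty_iff_ne_empty.mp ⟨0, hb0, hord0⟩)
            · obtain ⟨e, he, hbe, -⟩ := Set.mem_iUnion₂.mp h
              refine hw2 ⟨e, he⟩ b hbe ?_
              exact ((Set.subset_iUnion (fun e : PSet θ δ => w e) ⟨e, he⟩).trans
                ((Set.subset_insert _ _).trans hsub))


end PklNormal
end

section
/- Assume κ > ω and κ ≤ δ < κ⁺. Then the smallest [δ]^{<2}-normal ideal on P_κ(λ) equals ∇^{[δ]^{<2}} I_{κ,λ}. -/
open Cardinal Set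

namespace PklNormal

section Helpers
variable {κ : Cardinal.{0}} {l δ : Ordinal.{0}}

lemma ord_two : (2 : Cardinal.{0}).ord = (2 : Ordinal.{0}) := by
  rw [show (2:Cardinal.{0}) = ((2:ℕ):Cardinal) by norm_num, Cardinal.ord_nat]; norm_num

lemma lift_two : Cardinal.lift.{1} (2 : Cardinal.{0}) = 2 := by simp

lemma lt_two_iff' {x : Ordinal.{0}} : x < 2 ↔ x = 0 ∨ x = 1 := by
  rw [show (2:Ordinal.{0}) = (1:Ordinal) + 1 by norm_num, Ordinal.add_one_eq_succ,
    Order.lt_succ_iff, Ordinal.le_one_iff]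

lemma two_lt_iff {c : Cardinal.{1}} : c < 2 ↔ c ≤ 1 := by
  rw [show (2:Cardinal.{1}) = ((1:ℕ).succ : Cardinal) by norm_num, Cardinal.nat_succ,
    Order.lt_succ_iff, Nat.cast_one]

lemma empty_mem_P2 : (∅ : Set Ordinal.{0}) ∈ PSet 2 δ := by
  refine ⟨by simp, ?_⟩
  rw [lift_two, Cardinal.mk_emptyCollection]
  norm_num

lemma singleton_mem_P2 {α : Ordinal.{0}} (h : α < δ) : ({α} : Set Ordinal.{0}) ∈ PSet 2 δ := by
  refine ⟨by simpa using h, ?_⟩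
  rw [lift_two, Cardinal.mk_singleton]
  norm_num

lemma mem_P2_iff {e : Set Ordinal.{0}} : e ∈ PSet 2 δ ↔ e = ∅ ∨ ∃ α < δ, e = {α} := by
  constructor
  · rintro ⟨hsub, hcard⟩
    rw [lift_two, two_lt_iff, Cardinal.mk_le_one_iff_set_subsingleton] at hcard
    rcases hcard.eq_empty_or_singleton with h | ⟨α, h⟩
    · exact Or.inl h
    · exact Or.inr ⟨α, hsub (h ▸ rfl), h⟩
  · rintro (rfl | ⟨α, hα, rfl⟩)
    · exact empty_mem_P2
    · exact singleton_mem_P2 hα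

lemma inter_two_sub {b : Set Ordinal.{0}} : b ∩ Iio (2:Ordinal) ⊆ {0, 1} := by
  rintro x ⟨-, hx⟩
  simpa using lt_two_iff'.1 hx

lemma one_lt_mk_inter_iff {b : Set Ordinal.{0}} :
    1 < #↥(b ∩ Iio (2:Ordinal.{0})) ↔ (0:Ordinal) ∈ b ∧ (1:Ordinal) ∈ b := by
  rw [Cardinal.one_lt_iff_nontrivial, Set.nontrivial_coe_sort]
  constructor
  · rintro ⟨x, hx, y, hy, hxy⟩
    have hx' := inter_two_sub hx
    have hy' := inter_two_sub hy
    simp only [mem_insert_iff, mem_singleton_iff] at hx' hy'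
    rcases hx' with rfl | rfl <;> rcases hy' with rfl | rfl <;>
      first
        | exact absurd rfl hxy
        | exact ⟨hx.1, hy.1⟩
        | exact ⟨hy.1, hx.1⟩
  · rintro ⟨h0, h1⟩
    refine ⟨0, ⟨h0, by norm_num⟩, 1, ⟨h1, by norm_num⟩, by norm_num⟩

lemma zero_lt_mk_inter_iff {b : Set Ordinal.{0}} :
    0 < #↥(b ∩ Iio (2:Ordinal.{0})) ↔ (0:Ordinal) ∈ b ∨ (1:Ordinal) ∈ b := by
  rw [pos_iff_ne_zero, ne_eq, Cardinal.mk_eq_zero_iff, not_isEmpty_iff,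
    Set.nonempty_coe_sort.symm.symm]
  constructor
  · rintro ⟨x, hx, hx2⟩
    rcases lt_two_iff'.1 hx2 with rfl | rfl
    · exact Or.inl hx
    · exact Or.inr hx
  · rintro (h | h)
    · exact ⟨0, h, by norm_num⟩
    · exact ⟨1, h, by norm_num⟩

lemma inP_empty_iff {b : Set Ordinal.{0}} :
    inP 2 δ b ∅ ↔ (0:Ordinal) ∈ b ∨ (1:Ordinal) ∈ b := by
  rw [inP, ord_two, Cardinal.mk_emptyCollection]
  simp only [empty_subset, true_and]
  exact zero_lt_mk_inter_iff

lemma inP_singleton_iff {b : Set Ordinal.{0}} {α : Ordinal.{0}} :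
    inP 2 δ b {α} ↔ (α ∈ b ∧ α < δ) ∧ (0:Ordinal) ∈ b ∧ (1:Ordinal) ∈ b := by
  rw [inP, ord_two, Cardinal.mk_singleton, one_lt_mk_inter_iff]
  simp [singleton_subset_iff]

end Helpers

section Helpers2
variable {κ : Cardinal.{0}} {l δ : Ordinal.{0}}

lemma isRegular_lift (h : κ.IsRegular) : (Cardinal.lift.{1} κ).IsRegular := by
  constructor
  · exact Cardinal.aleph0_le_lift.2 h.1
  · rw [← Cardinal.lift_ord, ← Ordinal.lift_cof]
    calc Cardinal.lift.{1} κ ≤ Cardinal.lift.{1} κ.ord.cof := Cardinal.lift_le.2 h.2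
    _ = _ := rfl

lemma subset_mem_PSet {x y : Set Ordinal.{0}} (h : y ⊆ x) (hx : x ∈ PSet κ l) : y ∈ PSet κ l :=
  ⟨h.trans hx.1, lt_of_le_of_lt (Cardinal.mk_le_mk_of_subset h) hx.2⟩

lemma empty_mem_PSet_s13 (hκ : ℵ₀ ≤ κ) : (∅ : Set Ordinal.{0}) ∈ PSet κ l := by
  refine ⟨by simp, ?_⟩
  rw [Cardinal.mk_emptyCollection]
  exact lt_of_lt_of_le Cardinal.aleph0_pos (Cardinal.aleph0_le_lift.2 hκ)

lemma singleton_mem_PSet (hκ : ℵ₀ ≤ κ) {x : Ordinal.{0}} (hx : x < l) :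
    ({x} : Set Ordinal.{0}) ∈ PSet κ l := by
  refine ⟨by simpa using hx, ?_⟩
  rw [Cardinal.mk_singleton]
  exact lt_of_lt_of_le Cardinal.one_lt_aleph0 (Cardinal.aleph0_le_lift.2 hκ)

lemma union_mem_PSet (hκ : ℵ₀ ≤ κ) {x y : Set Ordinal.{0}}
    (hx : x ∈ PSet κ l) (hy : y ∈ PSet κ l) : x ∪ y ∈ PSet κ l := by
  refine ⟨union_subset hx.1 hy.1, lt_of_le_of_lt (Cardinal.mk_union_le x y) ?_⟩
  exact Cardinal.add_lt_of_lt (Cardinal.aleph0_le_lift.2 hκ) hx.2 hy.2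

lemma iUnion_mem_PSet (hκ : κ.IsRegular) {ι : Type 1} (f : ι → Set Ordinal.{0})
    (hι : #ι < Cardinal.lift.{1} κ) (h : ∀ i, f i ∈ PSet κ l) : (⋃ i, f i) ∈ PSet κ l := by
  refine ⟨iUnion_subset fun i => (h i).1, ?_⟩
  refine lt_of_le_of_lt (Cardinal.mk_iUnion_le f) ?_
  refine Cardinal.mul_lt_of_lt (Cardinal.aleph0_le_lift.2 hκ.1) hι ?_
  exact Cardinal.iSup_lt_of_isRegular (isRegular_lift hκ) hι fun i => (h i).2

end Helpers2

section NormalForm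
variable {κ : Cardinal.{0}} {l δ : Ordinal.{0}}

/-- Normal form for membership in `∇ I_{κ,l}`. -/
lemma mem_nabla_iff {B : Set (Set Ordinal.{0})} :
    B ∈ nabla κ l 2 δ (Ikl κ l) ↔
      B ⊆ PSet κ l ∧ ∃ c : Set Ordinal.{0} → Set Ordinal.{0},
        (∀ e ∈ PSet (2:Cardinal.{0}) δ, c e ∈ PSet κ l) ∧
        ∀ b ∈ B, b ∩ Set.Iio ((2:Cardinal.{0}).ord) ≠ ∅ →
          ∃ e ∈ PSet (2:Cardinal.{0}) δ, inP 2 δ b e ∧ ¬ c e ⊆ b := by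
  constructor
  · rintro ⟨F, hF, hsub⟩
    have hFsub : ∀ e ∈ PSet (2:Cardinal.{0}) δ, F e ⊆ PSet κ l := fun e he => (hF e he).1
    have hBP : B ⊆ PSet κ l := by
      intro b hb
      rcases hsub hb with h | h
      · exact h.1
      · simp only [mem_iUnion] at h
        obtain ⟨e, he, hb', -⟩ := h
        exact hFsub e he hb'
    classical
    refine ⟨hBP, fun e => if he : e ∈ PSet (2:Cardinal.{0}) δ then
      Classical.choose (hF e he).2 else ∅, fun e he => ?_, fun b hb hb2 => ?_⟩
    · simp only [dif_pos he]
      exact (Classical.choose_spec (hF e he).2).1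
    · rcases hsub hb with h | h
      · exact absurd h.2 hb2
      · simp only [mem_iUnion] at h
        obtain ⟨e, he, hbe, hinP⟩ := h
        refine ⟨e, he, hinP, ?_⟩
        simp only [dif_pos he]
        exact (Classical.choose_spec (hF e he).2).2 b hbe
  · rintro ⟨hBP, c, hc, hprop⟩
    refine ⟨fun e => {y | y ∈ PSet κ l ∧ ¬ c e ⊆ y}, fun e he => ?_, fun b hb => ?_⟩
    · exact ⟨fun y hy => hy.1, c e, hc e he, fun y hy => hy.2⟩
    · by_cases hb2 : b ∩ Set.Iio ((2:Cardinal.{0}).ord) = ∅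
      · exact Or.inl ⟨hBP hb, hb2⟩
      · obtain ⟨e, he, hinP, hns⟩ := hprop b hb hb2
        refine Or.inr ?_
        simp only [mem_iUnion]
        exact ⟨e, he, ⟨hBP hb, hns⟩, hinP⟩

lemma nabla_mono {σ : Cardinal.{0}} {γ : Ordinal.{0}} {J J' : Set (Set (Set Ordinal.{0}))}
    (h : J ⊆ J') : nabla κ l σ γ J ⊆ nabla κ l σ γ J' := by
  rintro B ⟨F, hF, hsub⟩
  exact ⟨F, fun e he => h (hF e he), hsub⟩

lemma Ikl_subset_nabla : Ikl κ l ⊆ nabla κ l 2 δ (Ikl κ l) := by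
  rintro B ⟨hBP, a, haP, ha⟩
  refine mem_nabla_iff.2 ⟨hBP, fun _ => a, fun e _ => haP, fun b hb hb2 => ?_⟩
  refine ⟨∅, empty_mem_P2, inP_empty_iff.2 ?_, ha b hb⟩
  rw [ord_two] at hb2
  rcases nonempty_iff_ne_empty.2 hb2 with ⟨x, hx⟩
  rcases lt_two_iff'.1 hx.2 with rfl | rfl
  · exact Or.inl hx.1
  · exact Or.inr hx.1

end NormalForm

section Closure
variable {κ : Cardinal.{0}} {l δ : Ordinal.{0}}

lemma exists_closed_s13 (hκ : κ.IsRegular) (hω : ℵ₀ < κ) (h1l : (1:Ordinal.{0}) < l)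
    (hδl : δ ≤ l)
    (c : Set Ordinal.{0} → Set Ordinal.{0})
    (hc : ∀ e ∈ PSet (2:Cardinal.{0}) δ, c e ∈ PSet κ l) :
    ∃ b ∈ PSet κ l, (0:Ordinal) ∈ b ∧ (1:Ordinal) ∈ b ∧
      ∀ e ∈ PSet (2:Cardinal.{0}) δ, inP 2 δ b e → c e ⊆ b := by
  have h0l : (0:Ordinal.{0}) < l := lt_trans zero_lt_one h1l
  set s : ℕ → Set Ordinal.{0} :=
    fun n => Nat.rec (({0, 1} : Set Ordinal.{0}) ∪ c ∅)
      (fun _ prev => prev ∪ ⋃ (γ : ↥(prev ∩ Iio δ)), c {γ.1}) n with hs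
  have hsP : ∀ n, s n ∈ PSet κ l := by
    intro n
    induction n with
    | zero =>
      refine union_mem_PSet hκ.1 ?_ (hc ∅ empty_mem_P2)
      rw [Set.insert_eq (0:Ordinal.{0}) {1}]
      exact union_mem_PSet hκ.1 (singleton_mem_PSet hκ.1 h0l) (singleton_mem_PSet hκ.1 h1l)
    | succ n ih =>
      refine union_mem_PSet hκ.1 ih ?_
      refine iUnion_mem_PSet hκ _ ?_ ?_
      · exact lt_of_le_of_lt (Cardinal.mk_le_mk_of_subset inter_subset_left) ih.2
      · rintro ⟨γ, hγ, hγδ⟩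
        exact hc _ (singleton_mem_P2 hγδ)
  have hmono : ∀ n, s n ⊆ s (n + 1) := fun n => subset_union_left
  set b : Set Ordinal.{0} := ⋃ (n : ULift.{1,0} ℕ), s n.down with hb
  have hsb : ∀ n, s n ⊆ b := fun n => subset_iUnion (fun m : ULift.{1,0} ℕ => s m.down) ⟨n⟩
  have hbP : b ∈ PSet κ l := by
    refine iUnion_mem_PSet hκ _ ?_ fun n => hsP n.down
    rw [Cardinal.mk_uLift, Cardinal.mk_denumerable, Cardinal.lift_aleph0]
    exact (Cardinal.lift_aleph0.{1,0} ▸ Cardinal.lift_lt.2 hω : (ℵ₀:Cardinal.{1}) < _)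
  have h0b : (0:Ordinal) ∈ b := hsb 0 (Or.inl (by simp))
  have h1b : (1:Ordinal) ∈ b := hsb 0 (Or.inl (by simp))
  refine ⟨b, hbP, h0b, h1b, fun e he hinP => ?_⟩
  rcases mem_P2_iff.1 he with rfl | ⟨α, hαδ, rfl⟩
  · exact (subset_union_right.trans (hsb 0) : c ∅ ⊆ b)
  · have hαb : α ∈ b := (inP_singleton_iff.1 hinP).1.1
    obtain ⟨n, hn⟩ := mem_iUnion.1 hαb
    have : c {α} ⊆ s (n.down + 1) := by
      refine subset_union_right.trans' ?_
      exact subset_iUnion (fun γ : ↥(s n.down ∩ Iio δ) => c {γ.1}) ⟨α, hn, hαδ⟩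
    exact this.trans (hsb (n.down + 1))

end Closure

section Idem
variable {κ : Cardinal.{0}} {l δ : Ordinal.{0}}

lemma nabla_idem (hκ : κ.IsRegular) (hκδ : κ.ord ≤ δ) (hδκ : δ.card ≤ κ) (hδl : δ ≤ l) :
    nabla κ l 2 δ (nabla κ l 2 δ (Ikl κ l)) ⊆ nabla κ l 2 δ (Ikl κ l) := by
  classical
  have hcardδ : δ.card = κ := le_antisymm hδκ (by
    have := Ordinal.card_le_card hκδ
    rwa [Cardinal.card_ord] at this)
  have h1 : #↥(Iio δ) = Cardinal.lift.{1} κ := by rw [Ordinal.mk_Iio_ordinal, hcardδ]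
  have h2 : #↥(Iio κ.ord) = Cardinal.lift.{1} κ := by
    rw [Ordinal.mk_Iio_ordinal, Cardinal.card_ord]
  obtain ⟨g⟩ : Nonempty (↥(Iio δ) ≃ ↥(Iio κ.ord)) := Cardinal.eq.1 (h1.trans h2.symm)
  have klim : Order.IsSuccLimit κ.ord := Cardinal.isSuccLimit_ord hκ.1
  rintro B ⟨F, hF, hsub⟩
  set cc : Set Ordinal.{0} → Set Ordinal.{0} → Set Ordinal.{0} :=
    fun e => if he : e ∈ PSet (2:Cardinal.{0}) δ then
      Classical.choose (mem_nabla_iff.1 (hF e he)).2 else fun _ => ∅ with hccdef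
  have hcc1 : ∀ e ∈ PSet (2:Cardinal.{0}) δ, ∀ e' ∈ PSet (2:Cardinal.{0}) δ,
      cc e e' ∈ PSet κ l := by
    intro e he e' he'
    simp only [hccdef, dif_pos he]
    exact (Classical.choose_spec (mem_nabla_iff.1 (hF e he)).2).1 e' he'
  have hcc2 : ∀ e, e ∈ PSet (2:Cardinal.{0}) δ → ∀ b ∈ F e,
      b ∩ Set.Iio ((2:Cardinal.{0}).ord) ≠ ∅ →
      ∃ e' ∈ PSet (2:Cardinal.{0}) δ, inP 2 δ b e' ∧ ¬ cc e e' ⊆ b := by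
    intro e he b hb hb2
    simp only [hccdef, dif_pos he]
    exact (Classical.choose_spec (mem_nabla_iff.1 (hF e he)).2).2 b hb hb2
  have hFsub : ∀ e ∈ PSet (2:Cardinal.{0}) δ, F e ⊆ PSet κ l :=
    fun e he => (mem_nabla_iff.1 (hF e he)).1
  -- successor function
  set tf : ↥(Iio δ) → ↥(Iio δ) := fun x => g.symm ⟨(g x).1 + 1, by
    rw [Ordinal.add_one_eq_succ]
    exact klim.succ_lt (Set.mem_Iio.1 (g x).2)⟩ with htf
  have hgt : ∀ x : ↥(Iio δ), (g x).1 < (g (tf x)).1 := by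
    intro x
    simp only [htf, Equiv.apply_symm_apply]
    rw [Ordinal.add_one_eq_succ]
    exact Order.lt_succ _
  -- the pair absorption sets
  set ps : ↥(Iio δ) → Set Ordinal.{0} := fun x =>
    ⋃ (p : ↥(Iio (g x).1) × ↥(Iio (g x).1)),
      cc {(g.symm ⟨p.1.1, lt_trans (Set.mem_Iio.1 p.1.2) (Set.mem_Iio.1 (g x).2)⟩).1}
         {(g.symm ⟨p.2.1, lt_trans (Set.mem_Iio.1 p.2.2) (Set.mem_Iio.1 (g x).2)⟩).1} with hps
  have key : ∀ (α : ↥(Iio δ)) (h : (g α).1 ∈ Iio κ.ord), g.symm ⟨(g α).1, h⟩ = α := by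
    intro α h
    rw [show (⟨(g α).1, h⟩ : ↥(Iio κ.ord)) = g α from Subtype.ext rfl,
      Equiv.symm_apply_apply]
  have hps_mem : ∀ (x α β : ↥(Iio δ)), (g α).1 < (g x).1 → (g β).1 < (g x).1 →
      cc {α.1} {β.1} ⊆ ps x := by
    intro x α β hα hβ z hz
    rw [hps]
    refine mem_iUnion.2 ⟨⟨⟨(g α).1, Set.mem_Iio.2 hα⟩, ⟨(g β).1, Set.mem_Iio.2 hβ⟩⟩, ?_⟩
    simp only []
    show z ∈ cc {(g.symm ⟨(g α).1, Set.mem_Iio.2 (lt_trans hα (g x).2)⟩).1}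
      {(g.symm ⟨(g β).1, Set.mem_Iio.2 (lt_trans hβ (g x).2)⟩).1}
    rw [key α _, key β _]
    exact hz
  set bc : ↥(Iio δ) → Set Ordinal.{0} := fun x =>
    cc ∅ {x.1} ∪ cc {x.1} ∅ ∪ {(tf x).1} ∪ ps x with hbc
  have hpiece1 : ∀ x : ↥(Iio δ), cc ∅ {x.1} ⊆ bc x :=
    fun x => (subset_union_left.trans subset_union_left).trans subset_union_left
  have hpiece2 : ∀ x : ↥(Iio δ), cc {x.1} ∅ ⊆ bc x :=
    fun x => (subset_union_right.trans subset_union_left).trans subset_union_left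
  have hpiece3 : ∀ x : ↥(Iio δ), (tf x).1 ∈ bc x :=
    fun x => Or.inl (Or.inr rfl)
  have hpiece4 : ∀ x : ↥(Iio δ), ps x ⊆ bc x := fun x => subset_union_right
  set cB : Set Ordinal.{0} → Set Ordinal.{0} := fun e =>
    cc ∅ ∅ ∪ ⋃ (x : ↥(Iio δ)) (_ : e = {x.1}), bc x with hcB
  have hcB_empty : cB (∅ : Set Ordinal.{0}) = cc ∅ ∅ := by
    simp only [hcB]
    rw [iUnion_eq_empty.2 fun x => iUnion_eq_empty.2 fun h =>
      absurd h.symm (singleton_ne_empty x.1), union_empty]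
  have hcB_sing : ∀ x : ↥(Iio δ), cB {x.1} = cc ∅ ∅ ∪ bc x := by
    intro x
    simp only [hcB]
    congr 1
    apply Subset.antisymm
    · refine iUnion₂_subset fun y hy => ?_
      have : y = x := Subtype.ext (singleton_eq_singleton_iff.1 hy.symm)
      rw [this]
    · exact subset_iUnion₂ (s := fun (y : ↥(Iio δ)) (_ : ({x.1} : Set Ordinal.{0}) = {y.1})
        => bc y) x rfl
  have hbcP : ∀ x : ↥(Iio δ), bc x ∈ PSet κ l := by
    intro x
    have e1 : ({x.1} : Set Ordinal.{0}) ∈ PSet 2 δ := singleton_mem_P2 (Set.mem_Iio.1 x.2)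
    refine union_mem_PSet hκ.1 (union_mem_PSet hκ.1 (union_mem_PSet hκ.1 ?_ ?_) ?_) ?_
    · exact hcc1 ∅ empty_mem_P2 _ e1
    · exact hcc1 _ e1 ∅ empty_mem_P2
    · exact singleton_mem_PSet hκ.1 (lt_of_lt_of_le (Set.mem_Iio.1 (tf x).2) hδl)
    · refine iUnion_mem_PSet hκ _ ?_ ?_
      · rw [Cardinal.mk_prod, Cardinal.lift_id, Ordinal.mk_Iio_ordinal]
        have hlt : (g x).1.card < κ := Cardinal.lt_ord.1 (Set.mem_Iio.1 (g x).2)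
        exact Cardinal.mul_lt_of_lt (Cardinal.aleph0_le_lift.2 hκ.1)
          (Cardinal.lift_lt.2 hlt) (Cardinal.lift_lt.2 hlt)
      · rintro ⟨p1, p2⟩
        exact hcc1 _ (singleton_mem_P2 (Set.mem_Iio.1 (g.symm _).2)) _
          (singleton_mem_P2 (Set.mem_Iio.1 (g.symm _).2))
  have hcBP : ∀ e ∈ PSet (2:Cardinal.{0}) δ, cB e ∈ PSet κ l := by
    intro e he
    rcases mem_P2_iff.1 he with rfl | ⟨α, hαδ, rfl⟩
    · rw [hcB_empty]
      exact hcc1 ∅ empty_mem_P2 ∅ empty_mem_P2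
    · rw [hcB_sing ⟨α, hαδ⟩]
      exact union_mem_PSet hκ.1 (hcc1 ∅ empty_mem_P2 ∅ empty_mem_P2) (hbcP ⟨α, hαδ⟩)
  refine mem_nabla_iff.2 ⟨?_, cB, hcBP, ?_⟩
  · intro b hb
    rcases hsub hb with h | h
    · exact h.1
    · simp only [mem_iUnion, mem_setOf_eq] at h
      obtain ⟨e, he, hbe, -⟩ := h
      exact hFsub e he hbe
  · intro b hb hb2
    by_contra hcon
    push_neg at hcon
    obtain ⟨e, he, hbe, hinP⟩ : ∃ e ∈ PSet (2:Cardinal.{0}) δ, b ∈ F e ∧ inP 2 δ b e := by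
      rcases hsub hb with h | h
      · exact absurd h.2 hb2
      · simp only [mem_iUnion, mem_setOf_eq] at h
        obtain ⟨e, he, hbe, hinP⟩ := h
        exact ⟨e, he, hbe, hinP⟩
    obtain ⟨e', he', hinP', hns⟩ := hcc2 e he b hbe hb2
    apply hns
    have h01 : (0:Ordinal) ∈ b ∨ (1:Ordinal) ∈ b := by
      rw [ord_two] at hb2
      rcases nonempty_iff_ne_empty.2 hb2 with ⟨z, hz⟩
      rcases lt_two_iff'.1 hz.2 with rfl | rfl
      · exact Or.inl hz.1
      · exact Or.inr hz.1
    have h0 : cc ∅ ∅ ⊆ b := by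
      have := hcon ∅ empty_mem_P2 (inP_empty_iff.2 h01)
      rwa [hcB_empty] at this
    have hbc_sub : ∀ x : ↥(Iio δ), x.1 ∈ b → (0:Ordinal) ∈ b → (1:Ordinal) ∈ b →
        bc x ⊆ b := by
      intro x hx h0b h1b
      have := hcon {x.1} (singleton_mem_P2 (Set.mem_Iio.1 x.2))
        (inP_singleton_iff.2 ⟨⟨hx, Set.mem_Iio.1 x.2⟩, h0b, h1b⟩)
      rw [hcB_sing x] at this
      exact (union_subset_iff.1 this).2
    have hpair : ∀ α β : ↥(Iio δ), α.1 ∈ b → β.1 ∈ b → (0:Ordinal) ∈ b →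
        (1:Ordinal) ∈ b → cc {α.1} {β.1} ⊆ b := by
      intro α β hα hβ h0b h1b
      rcases le_or_gt (g α).1 (g β).1 with h | h
      · have hxb : (tf β).1 ∈ b := hbc_sub β hβ h0b h1b (hpiece3 β)
        refine (hps_mem (tf β) α β (lt_of_le_of_lt h (hgt β)) (hgt β)).trans ?_
        exact (hpiece4 (tf β)).trans (hbc_sub (tf β) hxb h0b h1b)
      · have hxb : (tf α).1 ∈ b := hbc_sub α hα h0b h1b (hpiece3 α)
        refine (hps_mem (tf α) α β (hgt α) (lt_trans h (hgt α))).trans ?_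
        exact (hpiece4 (tf α)).trans (hbc_sub (tf α) hxb h0b h1b)
    rcases mem_P2_iff.1 he with rfl | ⟨α, hαδ, rfl⟩ <;>
      rcases mem_P2_iff.1 he' with rfl | ⟨β, hβδ, rfl⟩
    · exact h0
    · obtain ⟨⟨hβb, -⟩, h0b, h1b⟩ := inP_singleton_iff.1 hinP'
      exact (hpiece1 ⟨β, hβδ⟩).trans (hbc_sub ⟨β, hβδ⟩ hβb h0b h1b)
    · obtain ⟨⟨hαb, -⟩, h0b, h1b⟩ := inP_singleton_iff.1 hinP
      exact (hpiece2 ⟨α, hαδ⟩).trans (hbc_sub ⟨α, hαδ⟩ hαb h0b h1b)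
    · obtain ⟨⟨hαb, -⟩, h0b, h1b⟩ := inP_singleton_iff.1 hinP
      obtain ⟨⟨hβb, -⟩, -, -⟩ := inP_singleton_iff.1 hinP'
      exact hpair ⟨α, hαδ⟩ ⟨β, hβδ⟩ hαb hβb h0b h1b

end Idem

section Final
variable {κ : Cardinal.{0}} {l δ : Ordinal.{0}}

lemma sUnion_mem_nabla (hκ : κ.IsRegular) {Y : Set (Set (Set Ordinal.{0}))}
    (hY : Y ⊆ nabla κ l 2 δ (Ikl κ l)) (hYs : #↥Y < Cardinal.lift.{1} κ) :
    ⋃₀ Y ∈ nabla κ l 2 δ (Ikl κ l) := by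
  classical
  refine mem_nabla_iff.2 ⟨sUnion_subset fun A hA => (mem_nabla_iff.1 (hY hA)).1,
    fun e => ⋃ (A : ↥Y), Classical.choose (mem_nabla_iff.1 (hY A.2)).2 e,
    fun e he => ?_, fun b hb hb2 => ?_⟩
  · exact iUnion_mem_PSet hκ _ hYs fun A =>
      (Classical.choose_spec (mem_nabla_iff.1 (hY A.2)).2).1 e he
  · obtain ⟨A, hA, hbA⟩ := hb
    obtain ⟨e, he, hinP, hns⟩ :=
      (Classical.choose_spec (mem_nabla_iff.1 (hY hA)).2).2 b hbA hb2
    refine ⟨e, he, hinP, fun hsubb => hns (le_trans ?_ hsubb)⟩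
    exact subset_iUnion
      (fun A' : ↥Y => Classical.choose (mem_nabla_iff.1 (hY A'.2)).2 e) ⟨A, hA⟩

end Final

/-- Assume `κ > ω` and `κ ≤ δ < κ⁺`. Then the smallest `[δ]^{<2}`-normal ideal
on `P_κ(λ)` equals `∇^{[δ]^{<2}} I_{κ,λ}`. -/
theorem stmt13 (κ lam : Cardinal.{0}) (δ : Ordinal.{0})
    (hκ : κ.IsRegular) (hκω : ℵ₀ < κ) (hkl : κ ≤ lam)
    (hκδ : κ.ord ≤ δ) (hδκ : δ < (Order.succ κ).ord) (hdl : δ ≤ lam.ord) :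
    IsLeastNormalIdeal κ lam.ord 2 δ (nabla κ lam.ord 2 δ (Ikl κ lam.ord)) := by
  have hδκ' : δ.card ≤ κ := Order.lt_succ_iff.1 (Cardinal.lt_ord.1 hδκ)
  refine ⟨⟨⟨fun B hB => (mem_nabla_iff.1 hB).1, ?_, ?_, Ikl_subset_nabla, ?_⟩, ?_⟩, ?_⟩
  · rintro B ⟨F, h1, h2⟩ C hC
    exact ⟨F, h1, hC.trans h2⟩
  · exact fun Y hY _ hsize => sUnion_mem_nabla hκ hY hsize
  · intro hmem
    obtain ⟨hP, c, hc, hprop⟩ := mem_nabla_iff.1 hmem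
    have h1l : (1:Ordinal.{0}) < lam.ord := by
      refine lt_of_lt_of_le ?_ (hκδ.trans hdl)
      rw [Cardinal.lt_ord, Ordinal.card_one]
      exact lt_trans Cardinal.one_lt_aleph0 hκω
    obtain ⟨b, hbP, h0b, h1b, hcl⟩ := exists_closed_s13 hκ hκω h1l hdl c hc
    have hb2 : b ∩ Set.Iio ((2:Cardinal.{0}).ord) ≠ ∅ := by
      rw [ord_two]
      intro h
      exact Set.eq_empty_iff_forall_notMem.1 h 0 ⟨h0b, by norm_num⟩
    obtain ⟨e, he, hinP, hns⟩ := hprop b hbP hb2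
    exact hns (hcl e he hinP)
  · exact Subset.antisymm (nabla_mono Ikl_subset_nabla) (nabla_idem hκ hκδ hδκ' hdl)
  · intro J hJ
    refine le_trans (nabla_mono hJ.1.nonCofinal_subset) ?_
    rw [← hJ.2]


end PklNormal
end

section
/- Assume δ ≥ κ and θ is a limit cardinal, and let J be an ideal on P_κ(λ). Then J is [δ]^{<θ}-normal if and only if J is [δ]^{<ρ}-normal for every cardinal ρ with 2 ≤ ρ < θ. -/
open Cardinal Set

namespace PklNormal

section Stmt15Aux

variable {κ : Cardinal.{0}} {l : Ordinal.{0}} {J : Set (Set (Set Ordinal.{0}))}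

private lemma aleph0_le_lift_of_le (h : ℵ₀ ≤ κ) :
    (ℵ₀ : Cardinal.{1}) ≤ Cardinal.lift.{1} κ :=
  calc (ℵ₀ : Cardinal.{1}) = Cardinal.lift.{1} (ℵ₀ : Cardinal.{0}) := Cardinal.lift_aleph0.symm
    _ ≤ Cardinal.lift.{1} κ := Cardinal.lift_le.2 h

private lemma notSupset_mem_Ikl {c : Set Ordinal.{0}} (hc : c ∈ PSet κ l) :
    {b | b ∈ PSet κ l ∧ ¬ c ⊆ b} ∈ Ikl κ l :=
  ⟨fun _ hb => hb.1, c, hc, fun _ hb => hb.2⟩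

private lemma empty_mem_J (hJ : IsIdeal κ l J) (hκ0 : ℵ₀ ≤ κ) :
    (∅ : Set (Set Ordinal.{0})) ∈ J := by
  apply hJ.nonCofinal_subset
  refine ⟨Set.empty_subset _, ∅, ⟨Set.empty_subset _, ?_⟩,
    fun b hb => absurd hb (Set.notMem_empty b)⟩
  rw [Cardinal.mk_emptyCollection]
  exact lt_of_lt_of_le Cardinal.aleph0_pos (aleph0_le_lift_of_le hκ0)

private lemma union_mem_J (hJ : IsIdeal κ l J) (hκ0 : ℵ₀ ≤ κ) {B C : Set (Set Ordinal.{0})}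
    (hB : B ∈ J) (hC : C ∈ J) : B ∪ C ∈ J := by
  have h := hJ.sUnion_mem {B, C} ?_ ⟨B, by simp⟩ ?_
  · rwa [Set.sUnion_pair] at h
  · intro x hx
    simp only [Set.mem_insert_iff, Set.mem_singleton_iff] at hx
    rcases hx with rfl | rfl
    · exact hB
    · exact hC
  · exact lt_of_lt_of_le (Set.toFinite _).lt_aleph0 (aleph0_le_lift_of_le hκ0)

private lemma biUnion_mem_J (hJ : IsIdeal κ l J) (hκ0 : ℵ₀ ≤ κ) {e : Set Ordinal.{0}}
    {H : Ordinal.{0} → Set (Set Ordinal.{0})} (hH : ∀ ζ, H ζ ∈ J)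
    (he : #↥e < Cardinal.lift.{1} κ) : (⋃ ζ ∈ e, H ζ) ∈ J := by
  rcases Set.eq_empty_or_nonempty e with rfl | hne
  · simpa using empty_mem_J hJ hκ0
  · rw [← Set.sUnion_image]
    refine hJ.sUnion_mem _ ?_ (hne.image H) (lt_of_le_of_lt Cardinal.mk_image_le he)
    rintro x ⟨ζ, -, rfl⟩
    exact hH ζ

private lemma J_subset_nabla {σ : Cardinal.{0}} {γ : Ordinal.{0}}
    (hJ : IsIdeal κ l J) (hσ : 0 < σ) : J ⊆ nabla κ l σ γ J := by
  intro B hB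
  refine ⟨fun _ => B, fun e _ => hB, fun a ha => ?_⟩
  by_cases h : a ∩ Set.Iio σ.ord = ∅
  · exact Or.inl ⟨hJ.mem_subset B hB ha, h⟩
  · refine Or.inr (Set.mem_biUnion ⟨Set.empty_subset _, ?_⟩ ⟨ha, Set.empty_subset _, ?_⟩)
    · rw [Cardinal.mk_emptyCollection]
      have h' : Cardinal.lift.{1} (0 : Cardinal.{0}) < Cardinal.lift.{1} σ :=
        Cardinal.lift_lt.2 hσ
      rwa [Cardinal.lift_zero] at h'
    · rw [Cardinal.mk_emptyCollection]
      exact pos_iff_ne_zero.2 (Cardinal.mk_ne_zero_iff.2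
        (Set.nonempty_iff_ne_empty.2 h).to_subtype)

/-- The cover set associated with a family `F` at level `ρ`. -/
private def covSet (κ : Cardinal.{0}) (l δ : Ordinal.{0})
    (F : Set Ordinal.{0} → Set (Set Ordinal.{0})) (ρ : Cardinal.{0}) : Set (Set Ordinal.{0}) :=
  {a | a ∈ PSet κ l ∧ a ∩ Set.Iio ρ.ord = ∅} ∪
    ⋃ e ∈ PSet ρ δ, {a | a ∈ F e ∧ inP ρ δ a e}

private lemma covSet_mem_nabla {δ : Ordinal.{0}} {F : Set Ordinal.{0} → Set (Set Ordinal.{0})}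
    (hF : ∀ e, F e ∈ J) (ρ : Cardinal.{0}) : covSet κ l δ F ρ ∈ nabla κ l ρ δ J :=
  ⟨F, fun e _ => hF e, subset_rfl⟩

private noncomputable def rho1 (ζ : Ordinal.{0}) : Cardinal.{0} := Order.succ (ζ.card ⊔ 2)

private noncomputable def rho2 (ζ : Ordinal.{0}) : Cardinal.{0} := Order.succ (rho1 ζ)

private noncomputable def Hset (κ : Cardinal.{0}) (l δ : Ordinal.{0}) (θ : Cardinal.{0})
    (F : Set Ordinal.{0} → Set (Set Ordinal.{0})) (ζ : Ordinal.{0}) : Set (Set Ordinal.{0}) :=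
  haveI := Classical.propDecidable (rho2 ζ < θ)
  if rho2 ζ < θ then
    {b | b ∈ PSet κ l ∧ ¬ Set.Iio ((rho1 ζ).ord) ⊆ b} ∪ covSet κ l δ F (rho2 ζ)
  else ∅

end Stmt15Aux

/-- Assume `δ ≥ κ` and `θ` is a limit cardinal, and let `J` be an ideal on
`P_κ(λ)`. Then `J` is `[δ]^{<θ}`-normal iff `J` is `[δ]^{<ρ}`-normal for every cardinal `ρ`
with `2 ≤ ρ < θ`. -/
theorem stmt15 (κ lam θ : Cardinal.{0}) (δ : Ordinal.{0})
    (hκ : κ.IsRegular) (hkl : κ ≤ lam) (hθ2 : 2 ≤ θ) (hθκ : θ ≤ κ)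
    (hθlim : Order.IsSuccLimit θ)
    (hδ1 : 1 ≤ δ) (hdl : δ ≤ lam.ord) (hκδ : κ.ord ≤ δ)
    (J : Set (Set (Set Ordinal.{0}))) (hJ : IsIdeal κ lam.ord J) :
    IsNormal κ lam.ord θ δ J ↔
      ∀ ρ : Cardinal.{0}, 2 ≤ ρ → ρ < θ → IsNormal κ lam.ord ρ δ J := by
  classical
  have hκ0 : ℵ₀ ≤ κ := hκ.aleph0_le
  have hκlam : ℵ₀ ≤ lam := hκ0.trans hkl
  have hθℵ : ℵ₀ ≤ θ := by
    by_contra h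
    obtain ⟨n, rfl⟩ := Cardinal.lt_aleph0.1 (not_le.1 h)
    rcases n with _ | k
    · exact absurd hθ2 (by norm_num)
    · rw [show ((k + 1 : ℕ) : Cardinal.{0}) = Order.succ (k : Cardinal.{0}) from
        Cardinal.nat_succ k] at hθlim
      exact Order.not_isSuccLimit_succ _ hθlim
  have h2θ : (2 : Cardinal.{0}) < θ := lt_of_lt_of_le (by
    simpa using Cardinal.nat_lt_aleph0 2) hθℵ
  have h3θ : (3 : Cardinal.{0}) < θ := lt_of_lt_of_le (by
    simpa using Cardinal.nat_lt_aleph0 3) hθℵ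
  have hθδ : θ.ord ≤ δ := (Cardinal.ord_le_ord.2 hθκ).trans hκδ
  have h0θ : (0 : Ordinal.{0}) < θ.ord := by
    rw [Cardinal.lt_ord, Ordinal.card_zero]
    exact lt_of_lt_of_le two_pos hθ2
  have h01mem : ({0, 1} : Set Ordinal.{0}) ∈ PSet κ lam.ord := by
    constructor
    · intro x hx
      simp only [Set.mem_insert_iff, Set.mem_singleton_iff] at hx
      rcases hx with rfl | rfl
      · rw [Set.mem_Iio, Cardinal.lt_ord, Ordinal.card_zero]
        exact lt_of_lt_of_le Cardinal.aleph0_pos hκlam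
      · rw [Set.mem_Iio, Cardinal.lt_ord, Ordinal.card_one]
        exact lt_of_lt_of_le Cardinal.one_lt_aleph0 hκlam
    · exact lt_of_lt_of_le (Set.toFinite _).lt_aleph0 (aleph0_le_lift_of_le hκ0)
  have hX2 : {b | b ∈ PSet κ lam.ord ∧ ¬ ({0, 1} : Set Ordinal.{0}) ⊆ b} ∈ J :=
    hJ.nonCofinal_subset (notSupset_mem_Ikl h01mem)
  constructor
  · -- forward direction
    intro hN ρ hρ2 hρθ
    have hN' : J = nabla κ lam.ord θ δ J := hN
    refine Set.Subset.antisymm (J_subset_nabla hJ (lt_of_lt_of_le two_pos hρ2)) ?_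
    rintro B ⟨F, hF, hBsub⟩
    have hF' : ∀ e, (if e ∈ PSet ρ δ then F e else ∅) ∈ J := by
      intro e
      by_cases h : e ∈ PSet ρ δ
      · rw [if_pos h]; exact hF e h
      · rw [if_neg h]; exact empty_mem_J hJ hκ0
    have hV : covSet κ lam.ord δ (fun e => if e ∈ PSet ρ δ then F e else ∅) θ ∈ J := by
      rw [show J = nabla κ lam.ord θ δ J from hN']
      exact covSet_mem_nabla hF' θ
    refine hJ.subset_mem _ (union_mem_J hJ hκ0 hX2 hV) B ?_
    intro a ha
    rcases hBsub ha with h0 | hU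
    · left
      refine ⟨h0.1, fun hsub => ?_⟩
      have h0a : (0 : Ordinal) ∈ a := hsub (Set.mem_insert _ _)
      have : (0 : Ordinal) ∈ a ∩ Set.Iio ρ.ord := by
        refine ⟨h0a, ?_⟩
        rw [Set.mem_Iio, Cardinal.lt_ord, Ordinal.card_zero]
        exact lt_of_lt_of_le two_pos hρ2
      rw [h0.2] at this
      exact this
    · right
      simp only [Set.mem_iUnion, exists_prop] at hU
      obtain ⟨e, he, ha0, hinP⟩ := hU
      right
      refine Set.mem_biUnion (⟨he.1, lt_of_lt_of_le he.2 (Cardinal.lift_le.2 hρθ.le)⟩ :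
        e ∈ PSet θ δ) ?_
      refine ⟨?_, hinP.1, lt_of_lt_of_le hinP.2 ?_⟩
      · show a ∈ (if e ∈ PSet ρ δ then F e else ∅)
        rw [if_pos he]; exact ha0
      refine Cardinal.mk_le_mk_of_subset (fun x hx => ⟨hx.1, ?_⟩)
      exact lt_of_lt_of_le hx.2 (Cardinal.ord_le_ord.2 hρθ.le)
  · -- backward direction
    intro hall
    refine Set.Subset.antisymm (J_subset_nabla hJ (lt_of_lt_of_le two_pos hθ2)) ?_
    rintro B ⟨F, hF, hBsub⟩
    set F' : Set Ordinal.{0} → Set (Set Ordinal.{0}) :=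
      fun e => if e ∈ PSet θ δ then F e else ∅ with hF'def
    have hF' : ∀ e, F' e ∈ J := by
      intro e
      show (if e ∈ PSet θ δ then F e else ∅) ∈ J
      by_cases h : e ∈ PSet θ δ
      · rw [if_pos h]; exact hF e h
      · rw [if_neg h]; exact empty_mem_J hJ hκ0
    have hCov : ∀ ρ : Cardinal.{0}, 2 ≤ ρ → ρ < θ → covSet κ lam.ord δ F' ρ ∈ J := by
      intro ρ h2 hlt
      rw [show J = nabla κ lam.ord ρ δ J from hall ρ h2 hlt]
      exact covSet_mem_nabla hF' ρ
    have hrho2lt : ∀ ζ : Ordinal.{0}, ζ < θ.ord → rho2 ζ < θ := by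
      intro ζ h
      exact hθlim.succ_lt (hθlim.succ_lt (max_lt (Cardinal.lt_ord.1 h) h2θ))
    have h2rho2 : ∀ ζ : Ordinal.{0}, (2 : Cardinal.{0}) ≤ rho2 ζ := fun ζ =>
      le_sup_right.trans ((Order.le_succ _).trans (Order.le_succ _))
    have hrho1rho2 : ∀ ζ : Ordinal.{0}, rho1 ζ < rho2 ζ := fun ζ => Order.lt_succ _
    have hH : ∀ ζ, Hset κ lam.ord δ θ F' ζ ∈ J := by
      intro ζ
      unfold Hset
      by_cases h : rho2 ζ < θ
      · rw [if_pos h]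
        refine union_mem_J hJ hκ0 (hJ.nonCofinal_subset (notSupset_mem_Ikl ?_))
          (hCov _ (h2rho2 ζ) h)
        constructor
        · intro x hx
          exact lt_of_lt_of_le hx (Cardinal.ord_le_ord.2
            ((((hrho1rho2 ζ).trans h).le.trans hθκ).trans hkl))
        · rw [Ordinal.mk_Iio_ordinal, Cardinal.card_ord]
          exact Cardinal.lift_lt.2 (lt_of_lt_of_le ((hrho1rho2 ζ).trans h) hθκ)
      · rw [if_neg h]
        exact empty_mem_J hJ hκ0
    set G : Set Ordinal.{0} → Set (Set Ordinal.{0}) :=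
      fun e => ⋃ ζ ∈ e, Hset κ lam.ord δ θ F' ζ with hGdef
    have hG : ∀ e ∈ PSet (3 : Cardinal.{0}) δ, G e ∈ J := by
      intro e he
      refine biUnion_mem_J hJ hκ0 hH (lt_of_lt_of_le he.2 (Cardinal.lift_le.2 ?_))
      exact h3θ.le.trans hθκ
    have hW : covSet κ lam.ord δ G (3 : Cardinal.{0}) ∈ J := by
      rw [show J = nabla κ lam.ord 3 δ J from hall 3 (by norm_num) h3θ]
      exact ⟨G, fun e he => hG e he, subset_rfl⟩
    refine hJ.subset_mem _ (union_mem_J hJ hκ0 hX2 hW) B ?_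
    intro a ha
    rcases hBsub ha with h0 | hU
    · left
      refine ⟨h0.1, fun hsub => ?_⟩
      have h0a : (0 : Ordinal) ∈ a := hsub (Set.mem_insert _ _)
      have : (0 : Ordinal) ∈ a ∩ Set.Iio θ.ord := ⟨h0a, h0θ⟩
      rw [h0.2] at this
      exact this
    simp only [Set.mem_iUnion, exists_prop] at hU
    obtain ⟨e₀, he₀, ha0, hinP⟩ := hU
    have haP : a ∈ PSet κ lam.ord := hJ.mem_subset _ (hF e₀ he₀) ha0
    by_cases h01 : ({0, 1} : Set Ordinal.{0}) ⊆ a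
    swap
    · exact Or.inl ⟨haP, h01⟩
    right
    -- the element 0 and 1 of a, below (3 : Cardinal).ord
    have h0a : (0 : Ordinal) ∈ a := h01 (Set.mem_insert _ _)
    have h1a : (1 : Ordinal) ∈ a := h01 (Set.mem_insert_of_mem _ rfl)
    have h03 : (0 : Ordinal) < (3 : Cardinal.{0}).ord := by
      rw [Cardinal.lt_ord, Ordinal.card_zero]; norm_num
    have h13 : (1 : Ordinal) < (3 : Cardinal.{0}).ord := by
      rw [Cardinal.lt_ord, Ordinal.card_one]; norm_num
    have hnt : (1 : Cardinal.{1}) < #↥(a ∩ Set.Iio (3 : Cardinal.{0}).ord) := by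
      rw [Cardinal.one_lt_iff_nontrivial]
      exact ⟨⟨0, h0a, h03⟩, ⟨1, h1a, h13⟩, fun h => zero_ne_one (congrArg Subtype.val h)⟩
    -- decompose the witness cardinality
    obtain ⟨m₀, hm₀⟩ := Cardinal.mem_range_lift_of_le he₀.2.le
    have hm' : Cardinal.lift.{1} m₀ < #↥(a ∩ Set.Iio θ.ord) := by
      rw [hm₀]; exact hinP.2
    -- find the index ζ with a ∈ Hset ζ
    have key : ∃ ζ ∈ a ∩ Set.Iio θ.ord, a ∈ Hset κ lam.ord δ θ F' ζ := by
      have hmemCov : ∀ ζ ∈ a ∩ Set.Iio θ.ord, m₀ < rho2 ζ →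
          (Cardinal.lift.{1} m₀ < #↥(a ∩ Set.Iio (rho2 ζ).ord)) →
          a ∈ Hset κ lam.ord δ θ F' ζ := by
        intro ζ hζ hm1 hm2
        unfold Hset
        rw [if_pos (hrho2lt ζ hζ.2)]
        refine Or.inr (Or.inr (Set.mem_biUnion
          (⟨he₀.1, ?_⟩ : e₀ ∈ PSet (rho2 ζ) δ) ⟨?_, hinP.1, ?_⟩))
        · rw [← hm₀]; exact Cardinal.lift_lt.2 hm1
        · show a ∈ (if e₀ ∈ PSet θ δ then F e₀ else ∅)
          rw [if_pos he₀]; exact ha0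
        · rw [← hm₀]; exact hm2
      by_cases hII : ∀ ζ ∈ a ∩ Set.Iio θ.ord, Set.Iio ((rho1 ζ).ord) ⊆ a
      · -- every initial segment is contained in a
        have hζ₁ : ∃ ζ ∈ a ∩ Set.Iio θ.ord, m₀ ≤ ζ.card := by
          by_contra h
          push_neg at h
          have hsub : a ∩ Set.Iio θ.ord ⊆ Set.Iio m₀.ord := fun x hx =>
            Cardinal.lt_ord.2 (h x hx)
          have hle : #↥(a ∩ Set.Iio θ.ord) ≤ Cardinal.lift.{1} m₀ := by
            have := Cardinal.mk_le_mk_of_subset hsub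
            rwa [Ordinal.mk_Iio_ordinal, Cardinal.card_ord] at this
          exact absurd hm' (not_lt.2 hle)
        obtain ⟨ζ₁, hζ₁mem, hζ₁card⟩ := hζ₁
        have hm₀rho2 : m₀ < rho2 ζ₁ :=
          lt_of_le_of_lt (hζ₁card.trans le_sup_left)
            ((Order.lt_succ _).trans (Order.lt_succ _))
        by_cases hcase : a ∩ Set.Iio θ.ord ⊆ Set.Iio ((rho2 ζ₁).ord)
        · -- everything below the level of ζ₁
          refine ⟨ζ₁, hζ₁mem, hmemCov ζ₁ hζ₁mem hm₀rho2 ?_⟩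
          refine lt_of_lt_of_le hm' (Cardinal.mk_le_mk_of_subset ?_)
          exact fun x hx => ⟨hx.1, hcase hx⟩
        · -- there is an element above the level of ζ₁
          rw [Set.not_subset] at hcase
          obtain ⟨ζ₂, hζ₂mem, hζ₂big⟩ := hcase
          have hbig : rho2 ζ₁ ≤ ζ₂.card := Cardinal.ord_le.1 (not_lt.1 hζ₂big)
          have hm₀ζ₂ : m₀ ≤ ζ₂.card := (hm₀rho2.le.trans hbig)
          refine ⟨ζ₂, hζ₂mem, hmemCov ζ₂ hζ₂mem
            (lt_of_le_of_lt (hm₀ζ₂.trans le_sup_left)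
              ((Order.lt_succ _).trans (Order.lt_succ _))) ?_⟩
          have hsub : Set.Iio ((rho1 ζ₂).ord) ⊆ a ∩ Set.Iio ((rho2 ζ₂).ord) := by
            intro x hx
            exact ⟨hII ζ₂ hζ₂mem hx,
              lt_of_lt_of_le hx (Cardinal.ord_le_ord.2 (hrho1rho2 ζ₂).le)⟩
          have hle : Cardinal.lift.{1} (rho1 ζ₂) ≤ #↥(a ∩ Set.Iio ((rho2 ζ₂).ord)) := by
            have := Cardinal.mk_le_mk_of_subset hsub
            rwa [Ordinal.mk_Iio_ordinal, Cardinal.card_ord] at this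
          refine lt_of_lt_of_le (Cardinal.lift_lt.2 ?_) hle
          exact lt_of_le_of_lt (hm₀ζ₂.trans le_sup_left) (Order.lt_succ _)
      · -- some initial segment escapes a
        push_neg at hII
        obtain ⟨ζ, hζmem, hζnc⟩ := hII
        refine ⟨ζ, hζmem, ?_⟩
        unfold Hset
        rw [if_pos (hrho2lt ζ hζmem.2)]
        exact Or.inl ⟨haP, hζnc⟩
    obtain ⟨ζ, hζmem, haH⟩ := key
    have hsing : ({ζ} : Set Ordinal.{0}) ∈ PSet (3 : Cardinal.{0}) δ := by
      constructor
      · intro x hx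
        rw [Set.mem_singleton_iff] at hx
        subst hx
        exact lt_of_lt_of_le hζmem.2 hθδ
      · rw [Cardinal.mk_singleton, Cardinal.lift_ofNat]
        norm_num
    refine Or.inr (Set.mem_biUnion hsing ⟨?_, ?_, ?_⟩)
    · show a ∈ ⋃ ζ' ∈ ({ζ} : Set Ordinal.{0}), Hset κ lam.ord δ θ F' ζ'
      exact Set.mem_biUnion rfl haH
    · intro x hx
      rw [Set.mem_singleton_iff] at hx
      subst hx
      exact ⟨hζmem.1, lt_of_lt_of_le hζmem.2 hθδ⟩
    · rw [Cardinal.mk_singleton]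
      exact hnt

end PklNormal
end
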